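/- arXiv:2003.03236 — 2 statements merged into one kernel-verified Lean document; each statement's English description precedes it below -/
import Mathlib

section
/- Let W be a condensed wall with special vertices a, b and bottleneck vertices z_0, …, z_r, let L_1 be a ladder contained in W, let R be a rung at an end of L_1 with endvertices v_1 and v_2, let P_1 be a v_1–a path in W and P_2 a v_2–z path in W for some bottleneck vertex z (paths of length 0 allowed), such that P_1, P_2 and L_1 are pairwise internally disjoint and the union L = L_1 ∪ P_1 ∪ P_2 does not contain b. Then L_1 has at most 5 rungs. -/
open SimpleGraph

/-- The elementary ladder with `n` rungs: vertices `(i, s)` for `i < n`, `s : Bool`;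
the two stringers are the paths `(0,s), (1,s), …, (n-1,s)` and the rungs are the
edges between `(i, false)` and `(i, true)`. -/
def elemLadder (n : ℕ) : SimpleGraph (Fin n × Bool) :=
  SimpleGraph.fromRel (fun x y =>
    (x.2 = y.2 ∧ (y.1 : ℕ) = (x.1 : ℕ) + 1) ∨ (x.1 = y.1 ∧ x.2 ≠ y.2))

/-- A subdivision copy of the graph `H` inside the graph `G`:  an injective choice of
branch vertices together with, for every edge of `H`, a path of `G` between the
corresponding branch vertices, such that distinct edge-paths meet only in common
branch endvertices and no branch vertex lies in the interior of an edge-path. -/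
structure SubdivCopy {U V : Type} (H : SimpleGraph U) (G : SimpleGraph V) where
  branch : U → V
  branch_inj : Function.Injective branch
  walk : ∀ ⦃a b : U⦄, H.Adj a b → G.Walk (branch a) (branch b)
  walk_isPath : ∀ ⦃a b : U⦄ (h : H.Adj a b), (walk h).IsPath
  walk_symm : ∀ ⦃a b : U⦄ (h : H.Adj a b), walk h.symm = (walk h).reverse
  walk_disj : ∀ ⦃a b a' b' : U⦄ (h : H.Adj a b) (h' : H.Adj a' b'), s(a, b) ≠ s(a', b') →
    ∀ x, x ∈ (walk h).support → x ∈ (walk h').support →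
      (x = branch a ∨ x = branch b) ∧ (x = branch a' ∨ x = branch b')
  branch_not_interior : ∀ ⦃a b : U⦄ (h : H.Adj a b) (c : U),
    branch c ∈ (walk h).support → c = a ∨ c = b

/-- The vertex set of a subdivision copy. -/
def SubdivCopy.verts {U V : Type} {H : SimpleGraph U} {G : SimpleGraph V}
    (S : SubdivCopy H G) : Set V :=
  Set.range S.branch ∪ {x | ∃ (a b : U) (h : H.Adj a b), x ∈ (S.walk h).support}

/-- The edge set of a subdivision copy. -/
def SubdivCopy.edges {U V : Type} {H : SimpleGraph U} {G : SimpleGraph V}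
    (S : SubdivCopy H G) : Set (Sym2 V) :=
  {e | ∃ (a b : U) (h : H.Adj a b), e ∈ (S.walk h).edges}

/-- `H` is a minor of `G`: there are nonempty, pairwise disjoint, connected branch
sets in `G`, one for each vertex of `H`, with an edge of `G` between the branch sets
of any two adjacent vertices of `H`. -/
def IsMinor {U V : Type} (H : SimpleGraph U) (G : SimpleGraph V) : Prop :=
  ∃ f : U → Set V,
    (∀ u, (f u).Nonempty) ∧
    (∀ u, (G.induce (f u)).Connected) ∧
    (∀ u u', u ≠ u' → Disjoint (f u) (f u')) ∧
    (∀ u u', H.Adj u u' → ∃ x ∈ f u, ∃ y ∈ f u', G.Adj x y)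

/-- The vertex type of a condensed wall of size `r`: the path vertices `u^j_k`
(`j` indexes the `r` horizontal paths, `k` the `2r` positions, both 0-indexed),
the bottleneck vertices `z_0, …, z_r`, and the two special vertices `a`, `b`. -/
def CWVert (r : ℕ) : Type := (Fin r × Fin (2 * r)) ⊕ (Fin (r + 1) ⊕ Bool)

/-- The path vertex `u^{j+1}_{k+1}` (so `j`, `k` are 0-indexed). -/
def cwU {r : ℕ} (j : Fin r) (k : Fin (2 * r)) : CWVert r := Sum.inl (j, k)

/-- The bottleneck vertex `z_i`. -/
def cwZ {r : ℕ} (i : Fin (r + 1)) : CWVert r := Sum.inr (Sum.inl i)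

/-- The special vertex `a` of the condensed wall. -/
def cwA (r : ℕ) : CWVert r := Sum.inr (Sum.inr false)

/-- The special vertex `b` of the condensed wall. -/
def cwB (r : ℕ) : CWVert r := Sum.inr (Sum.inr true)

/-- The vertex `c = z_0` of the condensed wall. -/
def cwC (r : ℕ) : CWVert r := cwZ (0 : Fin (r + 1))

/-- The vertex `d = z_r` of the condensed wall. -/
def cwD (r : ℕ) : CWVert r := cwZ (Fin.last r)

/-- The condensed wall of size `r`: for each `j ∈ [r]` a path `u^j_1 … u^j_{2r}`,
with `z_{j-1}` joined to the odd-position vertices and `z_j` to the even-position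
vertices of that path, consecutive `z`'s joined by an edge, `a` joined to all
`u^j_1` and `b` joined to all `u^j_{2r}`. -/
def condensedWall (r : ℕ) : SimpleGraph (CWVert r) :=
  SimpleGraph.fromRel (fun x y =>
    match x, y with
    | Sum.inl (j, k), Sum.inl (j', k') => j = j' ∧ (k' : ℕ) = (k : ℕ) + 1
    | Sum.inr (Sum.inl i), Sum.inr (Sum.inl i') => (i' : ℕ) = (i : ℕ) + 1
    | Sum.inr (Sum.inl i), Sum.inl (j, k) =>
        ((i : ℕ) = (j : ℕ) ∧ (k : ℕ) % 2 = 0) ∨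
        ((i : ℕ) = (j : ℕ) + 1 ∧ (k : ℕ) % 2 = 1)
    | Sum.inr (Sum.inr false), Sum.inl (_, k) => (k : ℕ) = 0
    | Sum.inr (Sum.inr true), Sum.inl (_, k) => (k : ℕ) + 1 = 2 * r
    | _, _ => False)

/-- A vertex of the condensed wall is a bottleneck vertex if it is one of the `z_i`. -/
def IsBottleneck {r : ℕ} (x : CWVert r) : Prop := ∃ i : Fin (r + 1), x = cwZ i

/-- The vertex set of the `j`-th layer of the condensed wall of size `r`
(0-indexed `j`): the vertices `u^j_1, …, u^j_{2r}` together with `z_{j-1}` and `z_j`. -/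
def layerVerts (r : ℕ) (j : Fin r) : Set (CWVert r) :=
  {x | (∃ k, x = cwU j k) ∨ x = cwZ j.castSucc ∨ x = cwZ j.succ}

/-- An X-wing in a graph `G` with designated vertices `a`, `b`, `c`, `d`: a ladder with
three rungs, two disjoint paths joining the endvertices of its first rung to `a` and
to `b`, and two further disjoint paths joining the endvertices of its last rung to `c`
and to `d`, all four paths internally disjoint from each other and from the ladder. -/
structure XWing {V : Type} (G : SimpleGraph V) (a b c d : V) where
  L : SubdivCopy (elemLadder 3) G
  Pa : G.Walk (L.branch (0, false)) a
  Pb : G.Walk (L.branch (0, true)) b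
  Pc : G.Walk (L.branch (2, false)) c
  Pd : G.Walk (L.branch (2, true)) d
  Pa_isPath : Pa.IsPath
  Pb_isPath : Pb.IsPath
  Pc_isPath : Pc.IsPath
  Pd_isPath : Pd.IsPath
  disj_ab : ∀ x, x ∈ Pa.support → x ∉ Pb.support
  disj_ac : ∀ x, x ∈ Pa.support → x ∉ Pc.support
  disj_ad : ∀ x, x ∈ Pa.support → x ∉ Pd.support
  disj_bc : ∀ x, x ∈ Pb.support → x ∉ Pc.support
  disj_bd : ∀ x, x ∈ Pb.support → x ∉ Pd.support
  disj_cd : ∀ x, x ∈ Pc.support → x ∉ Pd.support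
  Pa_L : ∀ x ∈ Pa.support, x ∈ L.verts → x = L.branch (0, false)
  Pb_L : ∀ x ∈ Pb.support, x ∈ L.verts → x = L.branch (0, true)
  Pc_L : ∀ x ∈ Pc.support, x ∈ L.verts → x = L.branch (2, false)
  Pd_L : ∀ x ∈ Pd.support, x ∈ L.verts → x = L.branch (2, true)

/-- The vertex set of an X-wing. -/
def XWing.wverts {V : Type} {G : SimpleGraph V} {a b c d : V} (X : XWing G a b c d) :
    Set V :=
  X.L.verts ∪ {x | x ∈ X.Pa.support} ∪ {x | x ∈ X.Pb.support} ∪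
    {x | x ∈ X.Pc.support} ∪ {x | x ∈ X.Pd.support}

/-- The edge set of an X-wing. -/
def XWing.wedges {V : Type} {G : SimpleGraph V} {a b c d : V} (X : XWing G a b c d) :
    Set (Sym2 V) :=
  X.L.edges ∪ {e | e ∈ X.Pa.edges} ∪ {e | e ∈ X.Pb.edges} ∪
    {e | e ∈ X.Pc.edges} ∪ {e | e ∈ X.Pd.edges}

namespace CW
variable {r : ℕ}

lemma cwU_inj {j j' : Fin r} {k k'} (h : cwU j k = cwU j' k') : j = j' ∧ k = k' := by
  have := Sum.inl_injective h
  exact ⟨congrArg Prod.fst this, congrArg Prod.snd this⟩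

lemma cwZ_inj {i i' : Fin (r+1)} (h : cwZ i = cwZ i') : i = i' := by
  exact Sum.inl_injective (Sum.inr_injective h)

lemma cwU_ne_cwZ {j k} {i : Fin (r+1)} : cwU j k ≠ cwZ i := fun h => Sum.inl_ne_inr h
lemma cwU_ne_cwA {j : Fin r} {k} : cwU j k ≠ cwA r := fun h => Sum.inl_ne_inr h
lemma cwU_ne_cwB {j : Fin r} {k} : cwU j k ≠ cwB r := fun h => Sum.inl_ne_inr h
lemma cwZ_ne_cwA {i : Fin (r+1)} : cwZ i ≠ cwA r := fun h => Sum.inl_ne_inr (Sum.inr_injective h)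
lemma cwZ_ne_cwB {i : Fin (r+1)} : cwZ i ≠ cwB r := fun h => Sum.inl_ne_inr (Sum.inr_injective h)

/-- Classification of vertices. -/
lemma vert_cases (x : CWVert r) :
    (∃ j k, x = cwU j k) ∨ (∃ i, x = cwZ i) ∨ x = cwA r ∨ x = cwB r := by
  rcases x with ⟨j, k⟩ | (i | (_|_))
  · exact Or.inl ⟨j, k, rfl⟩
  · exact Or.inr (Or.inl ⟨i, rfl⟩)
  · exact Or.inr (Or.inr (Or.inl rfl))
  · exact Or.inr (Or.inr (Or.inr rfl))

/-- Adjacency from a `u` vertex. -/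
lemma adj_u {j : Fin r} {k : Fin (2*r)} {y : CWVert r}
    (h : (condensedWall r).Adj (cwU j k) y) :
    (∃ k', y = cwU j k' ∧ ((k':ℕ) = (k:ℕ)+1 ∨ (k:ℕ) = (k':ℕ)+1)) ∨
    (y = cwZ j.castSucc ∧ (k:ℕ) % 2 = 0) ∨
    (y = cwZ j.succ ∧ (k:ℕ) % 2 = 1) ∨
    (y = cwA r ∧ (k:ℕ) = 0) ∨
    (y = cwB r ∧ (k:ℕ)+1 = 2*r) := by
  rw [condensedWall, fromRel_adj] at h
  obtain ⟨hne, h | h⟩ := h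
  · rcases y with ⟨j', k'⟩ | (i | (_|_))
    · have h' : j = j' ∧ (k' : ℕ) = (k : ℕ) + 1 := h
      exact Or.inl ⟨k', by rw [h'.1]; rfl, Or.inl h'.2⟩
    · exact (h : False).elim
    · exact (h : False).elim
    · exact (h : False).elim
  · rcases y with ⟨j', k'⟩ | (i | (_|_))
    · have h' : j' = j ∧ (k : ℕ) = (k' : ℕ) + 1 := h
      exact Or.inl ⟨k', by rw [h'.1]; rfl, Or.inr h'.2⟩
    · have h' : ((i : ℕ) = (j : ℕ) ∧ (k : ℕ) % 2 = 0) ∨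
          ((i : ℕ) = (j : ℕ) + 1 ∧ (k : ℕ) % 2 = 1) := h
      rcases h' with ⟨h1, h2⟩ | ⟨h1, h2⟩
      · refine Or.inr (Or.inl ⟨?_, h2⟩)
        have : i = j.castSucc := Fin.ext (by simp [h1])
        rw [this]; rfl
      · refine Or.inr (Or.inr (Or.inl ⟨?_, h2⟩))
        have : i = j.succ := Fin.ext (by simp [h1])
        rw [this]; rfl
    · have h' : (k : ℕ) = 0 := h
      exact Or.inr (Or.inr (Or.inr (Or.inl ⟨rfl, h'⟩)))
    · have h' : (k : ℕ) + 1 = 2*r := h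
      exact Or.inr (Or.inr (Or.inr (Or.inr ⟨rfl, h'⟩)))



/-- Adjacency from a `z` vertex. -/
lemma adj_z {i : Fin (r+1)} {y : CWVert r}
    (h : (condensedWall r).Adj (cwZ i) y) :
    (∃ i', y = cwZ i' ∧ ((i':ℕ) = (i:ℕ)+1 ∨ (i:ℕ) = (i':ℕ)+1)) ∨
    (∃ j k, y = cwU j k ∧ (((i:ℕ) = (j:ℕ) ∧ (k:ℕ) % 2 = 0) ∨
      ((i:ℕ) = (j:ℕ)+1 ∧ (k:ℕ) % 2 = 1))) := by
  rw [condensedWall, fromRel_adj] at h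
  obtain ⟨hne, h | h⟩ := h
  · rcases y with ⟨j', k'⟩ | (i' | (_|_))
    · have h' : ((i : ℕ) = (j' : ℕ) ∧ (k' : ℕ) % 2 = 0) ∨
          ((i : ℕ) = (j' : ℕ) + 1 ∧ (k' : ℕ) % 2 = 1) := h
      exact Or.inr ⟨j', k', rfl, h'⟩
    · have h' : (i' : ℕ) = (i:ℕ) + 1 := h
      exact Or.inl ⟨i', rfl, Or.inl h'⟩
    · exact (h : False).elim
    · exact (h : False).elim
  · rcases y with ⟨j', k'⟩ | (i' | (_|_))
    · exact (h : False).elim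
    · have h' : (i : ℕ) = (i':ℕ) + 1 := h
      exact Or.inl ⟨i', rfl, Or.inr h'⟩
    · exact (h : False).elim
    · exact (h : False).elim

/-- Adjacency from `a`. -/
lemma adj_a {y : CWVert r} (h : (condensedWall r).Adj (cwA r) y) :
    ∃ j k, y = cwU j k ∧ (k:ℕ) = 0 := by
  rw [condensedWall, fromRel_adj] at h
  obtain ⟨hne, h | h⟩ := h
  · rcases y with ⟨j', k'⟩ | (i' | (_|_))
    · have h' : (k' : ℕ) = 0 := h
      exact ⟨j', k', rfl, h'⟩
    · exact (h : False).elim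
    · exact (h : False).elim
    · exact (h : False).elim
  · rcases y with ⟨j', k'⟩ | (i' | (_|_))
    · exact (h : False).elim
    · exact (h : False).elim
    · exact (h : False).elim
    · exact (h : False).elim

/-- The height potential: `z_i ↦ 2i`, `u^j_k ↦ 2j+1`. -/
def gval : CWVert r → ℕ := fun x =>
  match x with
  | Sum.inl (j, _) => 2*(j:ℕ)+1
  | Sum.inr (Sum.inl i) => 2*(i:ℕ)
  | Sum.inr (Sum.inr _) => 0

lemma gval_u (j : Fin r) (k) : gval (cwU j k) = 2*(j:ℕ)+1 := rfl
lemma gval_z (i : Fin (r+1)) : gval (cwZ i : CWVert r) = 2*(i:ℕ) := rfl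

def kval : CWVert r → ℕ := fun x =>
  match x with
  | Sum.inl (_, k) => (k:ℕ)
  | _ => 0

lemma kval_u (j : Fin r) (k) : kval (cwU j k) = (k:ℕ) := rfl

def isRow (j : Fin r) (v : CWVert r) : Prop := ∃ k, v = cwU j k

lemma gstep {x y : CWVert r} (h : (condensedWall r).Adj x y)
    (hx : x ≠ cwA r ∧ x ≠ cwB r) (hy : y ≠ cwA r ∧ y ≠ cwB r) :
    gval x = gval y ∨ gval x + 1 = gval y ∨ gval y + 1 = gval x ∨
      ((∃ i, x = cwZ i) ∧ (∃ i, y = cwZ i) ∧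
        (gval x + 2 = gval y ∨ gval y + 2 = gval x)) := by
  rcases vert_cases x with ⟨j, k, rfl⟩ | ⟨i, rfl⟩ | rfl | rfl
  · rcases adj_u h with ⟨k', rfl, _⟩ | ⟨rfl, _⟩ | ⟨rfl, _⟩ | ⟨rfl, _⟩ | ⟨rfl, _⟩
    · exact Or.inl rfl
    · refine Or.inr (Or.inr (Or.inl ?_))
      rw [gval_u, gval_z, Fin.coe_castSucc]
    · refine Or.inr (Or.inl ?_)
      rw [gval_u, gval_z, Fin.val_succ]; omega
    · exact absurd rfl hy.1
    · exact absurd rfl hy.2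
  · rcases adj_z h with ⟨i', rfl, hii⟩ | ⟨j, k, rfl, hjk⟩
    · refine Or.inr (Or.inr (Or.inr ⟨⟨i, rfl⟩, ⟨i', rfl⟩, ?_⟩))
      rw [gval_z, gval_z]; omega
    · rcases hjk with ⟨h1, _⟩ | ⟨h1, _⟩
      · refine Or.inr (Or.inl ?_); rw [gval_z, gval_u]; omega
      · refine Or.inr (Or.inr (Or.inl ?_)); rw [gval_z, gval_u]; omega
  · exact absurd rfl hx.1
  · exact absurd rfl hx.2

lemma even_eq_z {x : CWVert r} {m : ℕ} (hg : gval x = 2*m)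
    (hx : x ≠ cwA r ∧ x ≠ cwB r) : ∃ i : Fin (r+1), (i:ℕ) = m ∧ x = cwZ i := by
  rcases vert_cases x with ⟨j, k, rfl⟩ | ⟨i, rfl⟩ | rfl | rfl
  · rw [gval_u] at hg; omega
  · rw [gval_z] at hg; exact ⟨i, by omega, rfl⟩
  · exact absurd rfl hx.1
  · exact absurd rfl hx.2

lemma zivt {x y : CWVert r} (w : (condensedWall r).Walk x y) :
    ∀ m : ℕ, (∀ v ∈ w.support, v ≠ cwA r ∧ v ≠ cwB r) →
    gval x ≤ 2*m → 2*m ≤ gval y →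
    ∃ i : Fin (r+1), (i:ℕ) = m ∧ cwZ i ∈ w.support := by
  induction w with
  | nil =>
    intro m hab h1 h2
    obtain ⟨i, him, hxz⟩ := even_eq_z (le_antisymm h1 h2)
      (hab _ (Walk.start_mem_support _))
    exact ⟨i, him, by rw [← hxz]; exact Walk.start_mem_support _⟩
  | @cons u v y h p ih =>
    intro m hab h1 h2
    have habp : ∀ t ∈ p.support, t ≠ cwA r ∧ t ≠ cwB r := by
      intro t ht; exact hab t (by rw [Walk.support_cons]; exact List.mem_cons_of_mem _ ht)
    have hu : u ≠ cwA r ∧ u ≠ cwB r := hab u (Walk.start_mem_support _)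
    have hv : v ≠ cwA r ∧ v ≠ cwB r := habp v (Walk.start_mem_support _)
    by_cases hle : gval v ≤ 2*m
    · obtain ⟨i, him, hm⟩ := ih m habp hle h2
      exact ⟨i, him, by rw [Walk.support_cons]; exact List.mem_cons_of_mem _ hm⟩
    · push_neg at hle
      rcases gstep h hu hv with heq | hup | hdn | ⟨⟨i, rfl⟩, ⟨i', hi'⟩, hpm⟩
      · omega
      · obtain ⟨i, him, hxz⟩ := even_eq_z (show gval u = 2*m by omega) hu
        exact ⟨i, him, by rw [← hxz]; exact Walk.start_mem_support _⟩
      · omega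
      · subst hi'
        rw [gval_z] at h1
        rw [gval_z] at hle
        rw [gval_z, gval_z] at hpm
        exact ⟨i, by omega, Walk.start_mem_support _⟩

lemma zivt' {x y : CWVert r} (w : (condensedWall r).Walk x y) (m : ℕ)
    (hab : ∀ v ∈ w.support, v ≠ cwA r ∧ v ≠ cwB r)
    (h : (gval x ≤ 2*m ∧ 2*m ≤ gval y) ∨ (gval y ≤ 2*m ∧ 2*m ≤ gval x)) :
    ∃ i : Fin (r+1), (i:ℕ) = m ∧ cwZ i ∈ w.support := by
  rcases h with ⟨h1, h2⟩ | ⟨h1, h2⟩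
  · exact zivt w m hab h1 h2
  · obtain ⟨i, him, hm⟩ := zivt w.reverse m
      (by intro v hv; exact hab v (by rwa [Walk.support_reverse, List.mem_reverse] at hv)) h1 h2
    exact ⟨i, him, by rwa [Walk.support_reverse, List.mem_reverse] at hm⟩

lemma row_step {x y : CWVert r} {j : Fin r} (h : (condensedWall r).Adj x y)
    (hx : isRow j x) (hy : isRow j y) :
    kval x + 1 = kval y ∨ kval y + 1 = kval x := by
  obtain ⟨k, rfl⟩ := hx
  obtain ⟨kk, rfl⟩ := hy
  rcases adj_u h with ⟨kn, he, hkk⟩ | ⟨he, _⟩ | ⟨he, _⟩ | ⟨he, _⟩ | ⟨he, _⟩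
  · obtain ⟨-, rfl⟩ := cwU_inj he
    rw [kval_u, kval_u]; omega
  · exact absurd he cwU_ne_cwZ
  · exact absurd he cwU_ne_cwZ
  · exact absurd he cwU_ne_cwA
  · exact absurd he cwU_ne_cwB

lemma kivt {x y : CWVert r} {j : Fin r} (w : (condensedWall r).Walk x y) :
    ∀ d : ℕ, (∀ v ∈ w.support, isRow j v) →
    kval x ≤ d → d ≤ kval y →
    ∃ kf : Fin (2*r), (kf:ℕ) = d ∧ cwU j kf ∈ w.support := by
  induction w with
  | nil =>
    intro d hrow h1 h2
    obtain ⟨k, hk⟩ := hrow _ (Walk.start_mem_support _)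
    rw [hk, kval_u] at h1 h2
    exact ⟨k, by omega, hk ▸ Walk.start_mem_support _⟩
  | @cons u v y h p ih =>
    intro d hrow h1 h2
    have hrowp : ∀ t ∈ p.support, isRow j t := by
      intro t ht; exact hrow t (by rw [Walk.support_cons]; exact List.mem_cons_of_mem _ ht)
    have hu : isRow j u := hrow u (Walk.start_mem_support _)
    have hv : isRow j v := hrowp v (Walk.start_mem_support _)
    by_cases hle : kval v ≤ d
    · obtain ⟨kf, hkf, hm⟩ := ih d hrowp hle h2
      exact ⟨kf, hkf, by rw [Walk.support_cons]; exact List.mem_cons_of_mem _ hm⟩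
    · push_neg at hle
      rcases row_step h hu hv with hup | hdn
      · obtain ⟨k, hk⟩ := hu
        rw [hk, kval_u] at h1 hup
        exact ⟨k, by omega, by rw [← hk]; exact Walk.start_mem_support _⟩
      · omega

lemma kivt' {x y : CWVert r} {j : Fin r} (w : (condensedWall r).Walk x y) (d : ℕ)
    (hrow : ∀ v ∈ w.support, isRow j v)
    (h : (kval x ≤ d ∧ d ≤ kval y) ∨ (kval y ≤ d ∧ d ≤ kval x)) :
    ∃ kf : Fin (2*r), (kf:ℕ) = d ∧ cwU j kf ∈ w.support := by
  rcases h with ⟨h1, h2⟩ | ⟨h1, h2⟩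
  · exact kivt w d hrow h1 h2
  · obtain ⟨kf, hkf, hm⟩ := kivt w.reverse d
      (by intro v hv; exact hrow v (by rwa [Walk.support_reverse, List.mem_reverse] at hv)) h1 h2
    exact ⟨kf, hkf, by rwa [Walk.support_reverse, List.mem_reverse] at hm⟩

lemma rowconf {x y : CWVert r} {j : Fin r} (w : (condensedWall r).Walk x y) :
    isRow j x →
    (∀ v ∈ w.support, v ≠ cwZ j.castSucc ∧ v ≠ cwZ j.succ ∧ v ≠ cwA r ∧ v ≠ cwB r) →
    ∀ v ∈ w.support, isRow j v := by
  induction w with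
  | nil =>
    intro hx _ v hv
    rw [Walk.support_nil, List.mem_singleton] at hv
    exact hv ▸ hx
  | @cons u w' y h p ih =>
    intro hx hav v hv
    have havp : ∀ t ∈ p.support, t ≠ cwZ j.castSucc ∧ t ≠ cwZ j.succ ∧ t ≠ cwA r ∧ t ≠ cwB r := by
      intro t ht; exact hav t (by rw [Walk.support_cons]; exact List.mem_cons_of_mem _ ht)
    have hwrow : isRow j w' := by
      obtain ⟨k, hk⟩ := hx
      subst hk
      have hmem : w' ∈ (Walk.cons h p).support := by
        rw [Walk.support_cons]; exact List.mem_cons_of_mem _ (Walk.start_mem_support _)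
      rcases adj_u h with ⟨kn, he, _⟩ | ⟨he, _⟩ | ⟨he, _⟩ | ⟨he, _⟩ | ⟨he, _⟩
      · exact ⟨kn, he⟩
      · exact absurd he (fun hh => (hav _ hmem).1 hh)
      · exact absurd he (fun hh => (hav _ hmem).2.1 hh)
      · exact absurd he (fun hh => (hav _ hmem).2.2.1 hh)
      · exact absurd he (fun hh => (hav _ hmem).2.2.2 hh)
    rw [Walk.support_cons] at hv
    rcases List.mem_cons.mp hv with rfl | hv
    · exact hx
    · exact ih hwrow havp v hv

lemma entry {x y : CWVert r} {p : Fin r} (w : (condensedWall r).Walk x y) :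
    isRow p x →
    (∀ v ∈ w.support, v ≠ cwZ p.castSucc ∧ v ≠ cwZ p.succ ∧ v ≠ cwB r) →
    isRow p y ∨ (cwA r ∈ w.support ∧ ∃ k0 : Fin (2*r), (k0:ℕ) = 0 ∧ cwU p k0 ∈ w.support) := by
  induction w with
  | nil => intro hx _; exact Or.inl hx
  | @cons u w' y h p' ih =>
    intro hx hav
    have havp : ∀ t ∈ p'.support, t ≠ cwZ p.castSucc ∧ t ≠ cwZ p.succ ∧ t ≠ cwB r := by
      intro t ht; exact hav t (by rw [Walk.support_cons]; exact List.mem_cons_of_mem _ ht)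
    obtain ⟨k, hk⟩ := hx
    subst hk
    have hmem : w' ∈ (Walk.cons h p').support := by
      rw [Walk.support_cons]; exact List.mem_cons_of_mem _ (Walk.start_mem_support _)
    rcases adj_u h with ⟨kn, he, _⟩ | ⟨he, _⟩ | ⟨he, _⟩ | ⟨he, hk0⟩ | ⟨he, _⟩
    · rcases ih ⟨kn, he⟩ havp with hy | ⟨ha, k0, hk0, hm⟩
      · exact Or.inl hy
      · exact Or.inr ⟨by rw [Walk.support_cons]; exact List.mem_cons_of_mem _ ha,
          k0, hk0, by rw [Walk.support_cons]; exact List.mem_cons_of_mem _ hm⟩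
    · exact absurd he (fun hh => (hav _ hmem).1 hh)
    · exact absurd he (fun hh => (hav _ hmem).2.1 hh)
    · refine Or.inr ⟨he ▸ hmem, k, hk0, Walk.start_mem_support _⟩
    · exact absurd he (fun hh => (hav _ hmem).2.2 hh)

end CW

section Split
variable {V : Type} {G : SimpleGraph V}

open SimpleGraph.Walk in
/-- If a path decomposes as `q.append d`, both parts are paths meeting only
at the junction. -/
lemma split_path {x y c : V} {w : G.Walk x y} (hw : w.IsPath) {q : G.Walk x c}
    {d : G.Walk c y} (hqd : w = q.append d) :
    q.IsPath ∧ d.IsPath ∧ ∀ v, v ∈ q.support → v ∈ d.support → v = c := by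
  have hsup : w.support = q.support ++ d.support.tail := by
    rw [hqd, support_append]
  have hnd : (q.support ++ d.support.tail).Nodup := by
    rw [← hsup]; exact hw.support_nodup
  rw [List.nodup_append] at hnd
  obtain ⟨h1, h2, h3⟩ := hnd
  have hdsup : d.support = c :: d.support.tail := support_eq_cons d
  refine ⟨(Walk.isPath_def _).mpr h1, (Walk.isPath_def _).mpr ?_, ?_⟩
  · rw [hdsup]
    exact List.Nodup.cons (fun hc => h3 c (end_mem_support q) c hc rfl) h2
  · intro v hvq hvd
    rw [hdsup, List.mem_cons] at hvd
    rcases hvd with rfl | hvd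
    · rfl
    · exact absurd (h3 v hvq v hvd rfl) (fun hf => hf)
end Split

section Arcs
variable {V : Type} {G : SimpleGraph V}

lemma mem_rev_support {x y : V} {p : G.Walk x y} {u : V} :
    u ∈ p.reverse.support ↔ u ∈ p.support := by
  rw [SimpleGraph.Walk.support_reverse, List.mem_reverse]

open SimpleGraph.Walk in
lemma arcs_same {x y v w : V} (T B : G.Walk x y) (hT : T.IsPath) (hB : B.IsPath)
    (hdisj : ∀ u, u ∈ T.support → u ∈ B.support → u = x ∨ u = y)
    (hv : v ∈ T.support) (hw : w ∈ T.support) :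
    ∃ (A₁ A₂ : G.Walk v w),
      (∀ u ∈ A₁.support, u ∈ T.support ∨ u ∈ B.support) ∧
      (∀ u ∈ A₂.support, u ∈ T.support ∨ u ∈ B.support) ∧
      (∀ u, u ∈ A₁.support → u ∈ A₂.support → u = v ∨ u = w) := by
  obtain ⟨T1, T2, hT12⟩ := (mem_support_iff_exists_append).mp hv
  obtain ⟨hT1p, hT2p, hJ1⟩ := split_path hT hT12
  have hmemT : ∀ u, u ∈ T1.support ∨ u ∈ T2.support → u ∈ T.support := by
    intro u hu; rw [hT12, mem_support_append_iff]; exact hu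
  have hwT : w ∈ T1.support ∨ w ∈ T2.support := by
    rw [← mem_support_append_iff, ← hT12]; exact hw
  rcases hwT with hw1 | hw2
  · -- w on the first half: A₁ inside T1, A₂ around through B
    obtain ⟨T11, T12, hT112⟩ := (mem_support_iff_exists_append).mp hw1
    obtain ⟨hT11p, hT12p, hJ2⟩ := split_path hT1p hT112
    have hmemT1 : ∀ u, u ∈ T11.support ∨ u ∈ T12.support → u ∈ T1.support := by
      intro u hu; rw [hT112, mem_support_append_iff]; exact hu
    refine ⟨T12.reverse, T2.append (B.reverse.append T11), ?_, ?_, ?_⟩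
    · intro u hu
      rw [mem_rev_support] at hu
      exact Or.inl (hmemT u (Or.inl (hmemT1 u (Or.inr hu))))
    · intro u hu
      rw [mem_support_append_iff, mem_support_append_iff] at hu
      rcases hu with hu | hu | hu
      · exact Or.inl (hmemT u (Or.inr hu))
      · exact Or.inr (mem_rev_support.mp hu)
      · exact Or.inl (hmemT u (Or.inl (hmemT1 u (Or.inl hu))))
    · intro u hu1 hu2
      rw [mem_rev_support] at hu1
      rw [mem_support_append_iff, mem_support_append_iff] at hu2
      rcases hu2 with hu2 | hu2 | hu2
      · -- u ∈ T12 ∩ T2 :  u ∈ T1 ∩ T2 ⇒ u = v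
        exact Or.inl (hJ1 u (hmemT1 u (Or.inr hu1)) hu2)
      · -- u ∈ T12 ∩ B
        rw [mem_rev_support] at hu2
        rcases hdisj u (hmemT u (Or.inl (hmemT1 u (Or.inr hu1)))) hu2 with rfl | rfl
        · -- u = x : x ∈ T12 and x ∈ T11 (start), so x = w
          exact Or.inr (hJ2 u (start_mem_support T11) hu1)
        · -- u = y : y ∈ T12 ⊆ T1, y ∈ T2 (end), so y = v
          exact Or.inl (hJ1 u (hmemT1 u (Or.inr hu1)) (end_mem_support T2))
      · exact Or.inr (hJ2 u hu2 hu1)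
  · -- w on the second half
    obtain ⟨T21, T22, hT212⟩ := (mem_support_iff_exists_append).mp hw2
    obtain ⟨hT21p, hT22p, hJ2⟩ := split_path hT2p hT212
    have hmemT2 : ∀ u, u ∈ T21.support ∨ u ∈ T22.support → u ∈ T2.support := by
      intro u hu; rw [hT212, mem_support_append_iff]; exact hu
    refine ⟨T21, T1.reverse.append (B.append T22.reverse), ?_, ?_, ?_⟩
    · intro u hu
      exact Or.inl (hmemT u (Or.inr (hmemT2 u (Or.inl hu))))
    · intro u hu
      rw [mem_support_append_iff, mem_support_append_iff] at hu
      rcases hu with hu | hu | hu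
      · rw [mem_rev_support] at hu
        exact Or.inl (hmemT u (Or.inl hu))
      · exact Or.inr hu
      · rw [mem_rev_support] at hu
        exact Or.inl (hmemT u (Or.inr (hmemT2 u (Or.inr hu))))
    · intro u hu1 hu2
      rw [mem_support_append_iff, mem_support_append_iff] at hu2
      rcases hu2 with hu2 | hu2 | hu2
      · rw [mem_rev_support] at hu2
        exact Or.inl (hJ1 u hu2 (hmemT2 u (Or.inl hu1)))
      · rcases hdisj u (hmemT u (Or.inr (hmemT2 u (Or.inl hu1)))) hu2 with rfl | rfl
        · exact Or.inl (hJ1 u (start_mem_support T1) (hmemT2 u (Or.inl hu1)))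
        · exact Or.inr (hJ2 u hu1 (end_mem_support T22))
      · rw [mem_rev_support] at hu2
        exact Or.inr (hJ2 u hu1 hu2)

open SimpleGraph.Walk in
lemma arcs_mixed {x y v w : V} (T B : G.Walk x y) (hT : T.IsPath) (hB : B.IsPath)
    (hdisj : ∀ u, u ∈ T.support → u ∈ B.support → u = x ∨ u = y)
    (hv : v ∈ T.support) (hw : w ∈ B.support) (hwT : w ∉ T.support) :
    ∃ (A₁ A₂ : G.Walk v w),
      (∀ u ∈ A₁.support, u ∈ T.support ∨ u ∈ B.support) ∧
      (∀ u ∈ A₂.support, u ∈ T.support ∨ u ∈ B.support) ∧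
      (∀ u, u ∈ A₁.support → u ∈ A₂.support → u = v ∨ u = w) := by
  obtain ⟨T1, T2, hT12⟩ := (mem_support_iff_exists_append).mp hv
  obtain ⟨hT1p, hT2p, hJT⟩ := split_path hT hT12
  obtain ⟨B1, B2, hB12⟩ := (mem_support_iff_exists_append).mp hw
  obtain ⟨hB1p, hB2p, hJB⟩ := split_path hB hB12
  have hmemT : ∀ u, u ∈ T1.support ∨ u ∈ T2.support → u ∈ T.support := by
    intro u hu; rw [hT12, mem_support_append_iff]; exact hu
  have hmemB : ∀ u, u ∈ B1.support ∨ u ∈ B2.support → u ∈ B.support := by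
    intro u hu; rw [hB12, mem_support_append_iff]; exact hu
  refine ⟨T1.reverse.append B1, T2.append B2.reverse, ?_, ?_, ?_⟩
  · intro u hu
    rw [mem_support_append_iff] at hu
    rcases hu with hu | hu
    · rw [mem_rev_support] at hu
      exact Or.inl (hmemT u (Or.inl hu))
    · exact Or.inr (hmemB u (Or.inl hu))
  · intro u hu
    rw [mem_support_append_iff] at hu
    rcases hu with hu | hu
    · exact Or.inl (hmemT u (Or.inr hu))
    · rw [mem_rev_support] at hu
      exact Or.inr (hmemB u (Or.inr hu))
  · intro u hu1 hu2
    rw [mem_support_append_iff] at hu1 hu2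
    rcases hu1 with hu1 | hu1 <;> rcases hu2 with hu2 | hu2
    · rw [mem_rev_support] at hu1
      exact Or.inl (hJT u hu1 hu2)
    · -- u ∈ T1 , u ∈ B2
      rw [mem_rev_support] at hu1
      rw [mem_rev_support] at hu2
      rcases hdisj u (hmemT u (Or.inl hu1)) (hmemB u (Or.inr hu2)) with rfl | rfl
      · exact Or.inr (hJB u (start_mem_support B1) hu2)
      · exact Or.inl (hJT u hu1 (end_mem_support T2))
    · -- u ∈ B1, u ∈ T2
      rcases hdisj u (hmemT u (Or.inr hu2)) (hmemB u (Or.inl hu1)) with rfl | rfl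
      · exact Or.inl (hJT u (start_mem_support T1) hu2)
      · exact Or.inr (hJB u hu1 (end_mem_support B2))
    · rw [mem_rev_support] at hu2
      exact Or.inr (hJB u hu1 hu2)

open SimpleGraph.Walk in
lemma arcs {x y v w : V} (T B : G.Walk x y) (hT : T.IsPath) (hB : B.IsPath)
    (hdisj : ∀ u, u ∈ T.support → u ∈ B.support → u = x ∨ u = y)
    (hv : v ∈ T.support ∨ v ∈ B.support) (hw : w ∈ T.support ∨ w ∈ B.support) :
    ∃ (A₁ A₂ : G.Walk v w),
      (∀ u ∈ A₁.support, u ∈ T.support ∨ u ∈ B.support) ∧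
      (∀ u ∈ A₂.support, u ∈ T.support ∨ u ∈ B.support) ∧
      (∀ u, u ∈ A₁.support → u ∈ A₂.support → u = v ∨ u = w) := by
  have hdisj' : ∀ u, u ∈ B.support → u ∈ T.support → u = x ∨ u = y := fun u h1 h2 =>
    hdisj u h2 h1
  by_cases hvT : v ∈ T.support
  · by_cases hwT : w ∈ T.support
    · exact arcs_same T B hT hB hdisj hvT hwT
    · rcases hw with hw | hw
      · exact absurd hw hwT
      · exact arcs_mixed T B hT hB hdisj hvT hw hwT
  · rcases hv with hv | hv
    · exact absurd hv hvT
    · by_cases hwB : w ∈ B.support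
      · obtain ⟨A₁, A₂, m1, m2, dd⟩ := arcs_same B T hB hT hdisj' hv hwB
        exact ⟨A₁, A₂, fun u hu => (m1 u hu).symm, fun u hu => (m2 u hu).symm, dd⟩
      · have hwT' : w ∈ T.support := by tauto
        obtain ⟨A₁, A₂, m1, m2, dd⟩ := arcs_mixed T B hT hB hdisj hwT' hv hvT
        refine ⟨A₁.reverse, A₂.reverse, ?_, ?_, ?_⟩
        · intro u hu; exact m1 u (mem_rev_support.mp hu)
        · intro u hu; exact m2 u (mem_rev_support.mp hu)
        · intro u hu1 hu2
          exact (dd u (mem_rev_support.mp hu1) (mem_rev_support.mp hu2)).symm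
end Arcs

namespace CW
variable {r : ℕ}

open SimpleGraph.Walk

lemma cwU_eq_iff {j j' : Fin r} {k k'} : cwU j k = cwU j' k' ↔ (j = j' ∧ k = k') := by
  constructor
  · exact cwU_inj
  · rintro ⟨rfl, rfl⟩; rfl

/-- In a "cycle" (two internally disjoint paths) inside a single row, there is
no room for an extra interior vertex: contradiction. -/
lemma row_cycle_false {x y : CWVert r} {j : Fin r} (T B : (condensedWall r).Walk x y)
    (hB : B.IsPath) (hxy : x ≠ y)
    (hdisj : ∀ u, u ∈ T.support → u ∈ B.support → u = x ∨ u = y)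
    (hrowT : ∀ v ∈ T.support, isRow j v) (hrowB : ∀ v ∈ B.support, isRow j v)
    (v₁ : CWVert r) (hv₁ : v₁ ∈ B.support) (hv₁x : v₁ ≠ x) (hv₁y : v₁ ≠ y) : False := by
  obtain ⟨kx, hx⟩ := hrowT x (start_mem_support T)
  obtain ⟨ky, hy⟩ := hrowT y (end_mem_support T)
  obtain ⟨kc, hc⟩ := hrowB v₁ hv₁
  have hkxy : (kx:ℕ) ≠ (ky:ℕ) := by
    intro h; exact hxy (by rw [hx, hy, cwU_eq_iff]; exact ⟨rfl, Fin.ext h⟩)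
  have hckx : (kc:ℕ) ≠ (kx:ℕ) := by
    intro h; exact hv₁x (by rw [hc, hx, cwU_eq_iff]; exact ⟨rfl, Fin.ext h⟩)
  have hcky : (kc:ℕ) ≠ (ky:ℕ) := by
    intro h; exact hv₁y (by rw [hc, hy, cwU_eq_iff]; exact ⟨rfl, Fin.ext h⟩)
  by_cases hfar : 2 ≤ (kx:ℕ) + (ky:ℕ) - 2 * min (kx:ℕ) (ky:ℕ)
  · -- |kx - ky| ≥ 2 : an intermediate column hits both paths internally
    set d := min (kx:ℕ) (ky:ℕ) + 1 with hd
    have hdT := kivt' (j := j) T d hrowT (by rw [hx, hy, kval_u, kval_u]; omega)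
    have hdB := kivt' (j := j) B d hrowB (by rw [hx, hy, kval_u, kval_u]; omega)
    obtain ⟨kf, hkf, hmT⟩ := hdT
    obtain ⟨kf', hkf', hmB⟩ := hdB
    have : kf' = kf := Fin.ext (by omega)
    subst this
    rcases hdisj _ hmT hmB with he | he
    · rw [hx, cwU_eq_iff] at he; have := congrArg Fin.val he.2; omega
    · rw [hy, cwU_eq_iff] at he; have := congrArg Fin.val he.2; omega
  · -- |kx - ky| = 1
    obtain ⟨B1, B2, hB12⟩ := (mem_support_iff_exists_append).mp hv₁
    obtain ⟨hB1p, hB2p, hJB⟩ := split_path hB hB12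
    have hrowB1 : ∀ v ∈ B1.support, isRow j v := fun v hv =>
      hrowB v (by rw [hB12, mem_support_append_iff]; exact Or.inl hv)
    have hrowB2 : ∀ v ∈ B2.support, isRow j v := fun v hv =>
      hrowB v (by rw [hB12, mem_support_append_iff]; exact Or.inr hv)
    have hcase : (kc:ℕ) < min (kx:ℕ) (ky:ℕ) ∨ max (kx:ℕ) (ky:ℕ) < (kc:ℕ) := by omega
    have hget : (∃ kf : Fin (2*r), (kf:ℕ) = (ky:ℕ) ∧ cwU j kf ∈ B1.support) ∨
        (∃ kf : Fin (2*r), (kf:ℕ) = (kx:ℕ) ∧ cwU j kf ∈ B2.support) := by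
      rcases hcase with hlt | hgt
      · rcases le_or_gt (kx:ℕ) (ky:ℕ) with hxy' | hxy'
        · -- min = kx : x appears in B2
          refine Or.inr (kivt' B2 (kx:ℕ) hrowB2 ?_)
          rw [hc, hy, kval_u, kval_u]; omega
        · -- min = ky : y appears in B1
          refine Or.inl (kivt' B1 (ky:ℕ) hrowB1 ?_)
          rw [hc, hx, kval_u, kval_u]; omega
      · rcases le_or_gt (kx:ℕ) (ky:ℕ) with hxy' | hxy'
        · -- max = ky : y appears in B1
          refine Or.inl (kivt' B1 (ky:ℕ) hrowB1 ?_)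
          rw [hc, hx, kval_u, kval_u]; omega
        · -- max = kx : x appears in B2
          refine Or.inr (kivt' B2 (kx:ℕ) hrowB2 ?_)
          rw [hc, hy, kval_u, kval_u]; omega
    rcases hget with ⟨kf, hkf, hm⟩ | ⟨kf, hkf, hm⟩
    · -- y ∈ B1.support, but y is also the end of B2
      have hyB1 : y ∈ B1.support := by
        rw [hy]; convert hm using 2; exact (Fin.ext hkf.symm : ky = kf)
      have : y = v₁ := hJB y hyB1 (end_mem_support B2)
      exact hv₁y this.symm
    · have hxB2 : x ∈ B2.support := by
        rw [hx]; convert hm using 2; exact (Fin.ext hkf.symm : kx = kf)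
      have : x = v₁ := hJB x (start_mem_support B1) hxB2
      exact hv₁x this.symm

end CW

namespace CW
variable {r : ℕ}
open SimpleGraph.Walk

/-- Localization of a cycle (= two internally disjoint paths) in the condensed wall,
avoiding `a` and `b`: the whole cycle lies in a single layer, and it contains a
bottleneck vertex of that layer. -/
lemma cycle_localize {x y : CWVert r} (T B : (condensedWall r).Walk x y)
    (hT : T.IsPath) (hB : B.IsPath) (hxy : x ≠ y)
    (hdisj : ∀ u, u ∈ T.support → u ∈ B.support → u = x ∨ u = y)
    (hab : ∀ v, v ∈ T.support ∨ v ∈ B.support → v ≠ cwA r ∧ v ≠ cwB r)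
    (v₁ : CWVert r) (hv₁ : v₁ ∈ B.support) (hv₁x : v₁ ≠ x) (hv₁y : v₁ ≠ y) :
    ∃ j : Fin r,
      (∀ v, v ∈ T.support ∨ v ∈ B.support →
        isRow j v ∨ v = cwZ j.castSucc ∨ v = cwZ j.succ) ∧
      (∃ i : Fin (r+1), (cwZ i ∈ T.support ∨ cwZ i ∈ B.support) ∧
        ((i:ℕ) = (j:ℕ) ∨ (i:ℕ) = (j:ℕ)+1)) := by
  -- abbreviation for membership in the cycle
  set OnC : CWVert r → Prop := fun v => v ∈ T.support ∨ v ∈ B.support with hOnC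
  -- two vertices of the cycle, both z's with indices two apart, are impossible;
  -- more generally we repeatedly use arcs + the z-IVT.
  have key : ∀ (v w : CWVert r), OnC v → OnC w → ∀ m : ℕ,
      ((gval v ≤ 2*m ∧ 2*m ≤ gval w) ∨ (gval w ≤ 2*m ∧ 2*m ≤ gval v)) →
      ∃ i : Fin (r+1), (i:ℕ) = m ∧ (cwZ i = v ∨ cwZ i = w) := by
    intro v w hv hw m hm
    obtain ⟨A₁, A₂, m1, m2, dd⟩ := arcs T B hT hB hdisj hv hw
    obtain ⟨i, him, hmem1⟩ := zivt' A₁ m (fun t ht => hab t (m1 t ht))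
      (by rcases hm with h | h; exacts [Or.inl h, Or.inr h])
    obtain ⟨i', him', hmem2⟩ := zivt' A₂ m (fun t ht => hab t (m2 t ht))
      (by rcases hm with h | h; exacts [Or.inl h, Or.inr h])
    rw [show i' = i from Fin.ext (by omega)] at hmem2
    rcases dd _ hmem1 hmem2 with he | he
    · exact ⟨i, him, Or.inl he⟩
    · exact ⟨i, him, Or.inr he⟩
  -- all u-vertices of the cycle lie in a single row
  have sub1 : ∀ (j j' : Fin r) (k k'), OnC (cwU j k) → OnC (cwU j' k') → j = j' := by
    have core : ∀ (j j' : Fin r) (k k'), OnC (cwU j k) → OnC (cwU j' k') →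
        (j:ℕ) < (j':ℕ) → False := by
      intro j j' k k' h1 h2 hlt
      obtain ⟨i, him, he⟩ := key _ _ h1 h2 ((j:ℕ)+1)
        (Or.inl ⟨by rw [gval_u]; omega, by rw [gval_u]; omega⟩)
      rcases he with he | he
      · exact cwU_ne_cwZ he.symm
      · exact cwU_ne_cwZ he.symm
    intro j j' k k' h1 h2
    rcases lt_trichotomy (j:ℕ) (j':ℕ) with h | h | h
    · exact absurd (core j j' k k' h1 h2 h) id
    · exact Fin.ext h
    · exact absurd (core j' j k' k h2 h1 h) id
  -- any two z's on the cycle have indices at distance at most one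
  have sub2 : ∀ (i i' : Fin (r+1)), OnC (cwZ i) → OnC (cwZ i') → (i:ℕ) ≤ (i':ℕ)+1 := by
    have core : ∀ (i i' : Fin (r+1)), OnC (cwZ i) → OnC (cwZ i') →
        (i:ℕ)+2 ≤ (i':ℕ) → False := by
      intro i i' h1 h2 hlt
      obtain ⟨i₀, him, he⟩ := key _ _ h1 h2 ((i:ℕ)+1)
        (Or.inl ⟨by rw [gval_z]; omega, by rw [gval_z]; omega⟩)
      rcases he with he | he
      · have := congrArg Fin.val (cwZ_inj he); omega
      · have := congrArg Fin.val (cwZ_inj he); omega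
    intro i i' h1 h2
    by_contra hcon
    exact core i' i h2 h1 (by omega)
  -- a z and a u on the cycle are in adjacent "levels"
  have sub3 : ∀ (i : Fin (r+1)) (j : Fin r) (k), OnC (cwZ i) → OnC (cwU j k) →
      (j:ℕ) ≤ (i:ℕ) ∧ (i:ℕ) ≤ (j:ℕ)+1 := by
    intro i j k h1 h2
    constructor
    · by_contra hcon
      push_neg at hcon
      obtain ⟨i₀, him, he⟩ := key _ _ h1 h2 (j:ℕ)
        (Or.inl ⟨by rw [gval_z]; omega, by rw [gval_u]; omega⟩)
      rcases he with he | he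
      · have := congrArg Fin.val (cwZ_inj he); omega
      · exact cwU_ne_cwZ he.symm
    · by_contra hcon
      push_neg at hcon
      obtain ⟨i₀, him, he⟩ := key _ _ h1 h2 ((j:ℕ)+1)
        (Or.inr ⟨by rw [gval_u]; omega, by rw [gval_z]; omega⟩)
      rcases he with he | he
      · have := congrArg Fin.val (cwZ_inj he); omega
      · exact cwU_ne_cwZ he.symm
  -- the cycle contains a u-vertex
  have hXon : OnC x := Or.inl (start_mem_support T)
  have hYon : OnC y := Or.inl (end_mem_support T)
  have hV1on : OnC v₁ := Or.inr hv₁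
  have exu : ∃ (j : Fin r) (k : Fin (2*r)), OnC (cwU j k) := by
    have hclass : ∀ v, OnC v → (∃ j k, v = cwU j k) ∨ (∃ i, v = cwZ i) := by
      intro v hv
      rcases vert_cases v with h | h | h | h
      · exact Or.inl h
      · exact Or.inr h
      · exact absurd h (hab v hv).1
      · exact absurd h (hab v hv).2
    rcases hclass x hXon with ⟨j, k, hx'⟩ | ⟨ix, hx'⟩
    · exact ⟨j, k, hx' ▸ hXon⟩
    rcases hclass y hYon with ⟨j, k, hy'⟩ | ⟨iy, hy'⟩
    · exact ⟨j, k, hy' ▸ hYon⟩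
    rcases hclass v₁ hV1on with ⟨j, k, hc'⟩ | ⟨ic, hc'⟩
    · exact ⟨j, k, hc' ▸ hV1on⟩
    · -- three distinct z's pairwise within distance one: impossible
      exfalso
      subst hx'; subst hy'; subst hc'
      have d1 : ix ≠ iy := fun h => hxy (by rw [h])
      have d2 : ic ≠ ix := fun h => hv₁x (by rw [h])
      have d3 : ic ≠ iy := fun h => hv₁y (by rw [h])
      have n1 : (ix:ℕ) ≠ (iy:ℕ) := fun h => d1 (Fin.ext h)
      have n2 : (ic:ℕ) ≠ (ix:ℕ) := fun h => d2 (Fin.ext h)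
      have n3 : (ic:ℕ) ≠ (iy:ℕ) := fun h => d3 (Fin.ext h)
      have b1 := sub2 _ _ hXon hYon
      have b2 := sub2 _ _ hYon hXon
      have b3 := sub2 _ _ hXon hV1on
      have b4 := sub2 _ _ hV1on hXon
      have b5 := sub2 _ _ hYon hV1on
      have b6 := sub2 _ _ hV1on hYon
      omega
  obtain ⟨j, k0, hjk0⟩ := exu
  -- the cycle contains a z-vertex
  have exz : ∃ i : Fin (r+1), OnC (cwZ i) := by
    by_contra hno
    push_neg at hno
    -- no z at all: everything is in row j, contradiction via row_cycle_false
    have hallrow : ∀ v, OnC v → isRow j v := by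
      -- first: x is a u in row j
      have hxu : isRow j x := by
        rcases vert_cases x with ⟨jx, kx, hx'⟩ | ⟨ix, hx'⟩ | hx' | hx'
        · have := sub1 jx j kx k0 (hx' ▸ hXon) hjk0
          exact ⟨kx, by rw [hx', this]⟩
        · exact absurd (hx' ▸ hXon) (by intro hcon; exact (hno ix) hcon)
        · exact absurd hx' (hab x hXon).1
        · exact absurd hx' (hab x hXon).2
      have havoidT : ∀ v ∈ T.support,
          v ≠ cwZ j.castSucc ∧ v ≠ cwZ j.succ ∧ v ≠ cwA r ∧ v ≠ cwB r := by
        intro v hv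
        refine ⟨fun h => hno _ (h ▸ Or.inl hv), fun h => hno _ (h ▸ Or.inl hv),
          (hab v (Or.inl hv)).1, (hab v (Or.inl hv)).2⟩
      have havoidB : ∀ v ∈ B.support,
          v ≠ cwZ j.castSucc ∧ v ≠ cwZ j.succ ∧ v ≠ cwA r ∧ v ≠ cwB r := by
        intro v hv
        refine ⟨fun h => hno _ (h ▸ Or.inr hv), fun h => hno _ (h ▸ Or.inr hv),
          (hab v (Or.inr hv)).1, (hab v (Or.inr hv)).2⟩
      intro v hv
      rcases hv with hv | hv
      · exact rowconf T hxu havoidT v hv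
      · exact rowconf B hxu havoidB v hv
    exact row_cycle_false T B hB hxy hdisj
      (fun v hv => hallrow v (Or.inl hv)) (fun v hv => hallrow v (Or.inr hv))
      v₁ hv₁ hv₁x hv₁y
  obtain ⟨i0, hi0⟩ := exz
  have hi0j := sub3 i0 j k0 hi0 hjk0
  refine ⟨j, ?_, ⟨i0, hi0, by omega⟩⟩
  intro v hv
  rcases vert_cases v with ⟨jv, kv, hv'⟩ | ⟨iv, hv'⟩ | hv' | hv'
  · subst hv'
    have := sub1 jv j kv k0 hv hjk0
    exact Or.inl ⟨kv, by rw [this]⟩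
  · subst hv'
    have := sub3 iv j k0 hv hjk0
    rcases Nat.eq_or_lt_of_le this.1 with he | hlt
    · exact Or.inr (Or.inl (by rw [show iv = j.castSucc from Fin.ext (by simp; omega)]))
    · exact Or.inr (Or.inr (by rw [show iv = j.succ from Fin.ext (by simp; omega)]))
  · exact absurd hv' (hab v hv).1
  · exact absurd hv' (hab v hv).2

end CW


lemma SubdivCopy.support_subset_verts {U V : Type} {H : SimpleGraph U} {G : SimpleGraph V}
    (S : SubdivCopy H G) {a b : U} (h : H.Adj a b) {v : V} (hv : v ∈ (S.walk h).support) :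
    v ∈ S.verts :=
  Or.inr ⟨a, b, h, hv⟩


section CycProps
variable {V : Type} {G : SimpleGraph V}

open SimpleGraph.Walk

/-- Assemble the "bottom path" of a ladder cell from a rung, a stringer, and the
next rung. -/
lemma cyc_props {xs xt ys yt : V}
    (ρ₀ : G.Walk xs xt) (Dw : G.Walk xt yt) (ρ₁ : G.Walk ys yt) (Aw : G.Walk xs ys)
    (hρ₀ : ρ₀.IsPath) (hDw : Dw.IsPath) (hρ₁ : ρ₁.IsPath) (hAw : Aw.IsPath)
    (h1 : ∀ v, v ∈ ρ₀.support → v ∈ Dw.support → v = xt)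
    (h2 : ∀ v, v ∈ Dw.support → v ∈ ρ₁.support → v = yt)
    (h3 : ∀ v, v ∈ ρ₀.support → v ∈ ρ₁.support → False)
    (h4 : ∀ v, v ∈ Aw.support → v ∈ ρ₀.support → v = xs)
    (h5 : ∀ v, v ∈ Aw.support → v ∈ Dw.support → False)
    (h6 : ∀ v, v ∈ Aw.support → v ∈ ρ₁.support → v = ys)
    (hne4 : xt ≠ yt) :
    (ρ₀.append (Dw.append ρ₁.reverse)).IsPath ∧
    (∀ v, v ∈ Aw.support → v ∈ (ρ₀.append (Dw.append ρ₁.reverse)).support →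
      v = xs ∨ v = ys) ∧
    (∀ v, v ∈ (ρ₀.append (Dw.append ρ₁.reverse)).support ↔
      (v ∈ ρ₀.support ∨ v ∈ Dw.support ∨ v ∈ ρ₁.support)) := by
  have hmem : ∀ v, v ∈ (ρ₀.append (Dw.append ρ₁.reverse)).support ↔
      (v ∈ ρ₀.support ∨ v ∈ Dw.support ∨ v ∈ ρ₁.support) := by
    intro v
    rw [mem_support_append_iff, mem_support_append_iff, mem_rev_support]
  refine ⟨?_, ?_, hmem⟩
  · -- path property
    have hQ : (Dw.append ρ₁.reverse).IsPath := by
      rw [isPath_def, support_append]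
      rw [List.nodup_append]
      refine ⟨hDw.support_nodup, ?_, ?_⟩
      · exact (hρ₁.reverse.support_nodup).tail
      · intro u hu w hu' huw
        subst huw
        have hu'' : u ∈ ρ₁.reverse.support := List.mem_of_mem_tail hu'
        rw [mem_rev_support] at hu''
        rw [h2 u hu hu''] at hu'
        have hnd : ρ₁.reverse.support.Nodup := hρ₁.reverse.support_nodup
        have hcons : ρ₁.reverse.support = yt :: ρ₁.reverse.support.tail :=
          support_eq_cons _
        rw [hcons] at hnd
        exact (List.nodup_cons.mp hnd).1 hu'
    rw [isPath_def, support_append, List.nodup_append]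
    refine ⟨hρ₀.support_nodup, hQ.support_nodup.tail, ?_⟩
    intro u hu w hu' huw
    subst huw
    have hu'' : u ∈ (Dw.append ρ₁.reverse).support := List.mem_of_mem_tail hu'
    rw [mem_support_append_iff, mem_rev_support] at hu''
    have hueq : u = xt := by
      rcases hu'' with h | h
      · exact h1 u hu h
      · exact absurd (h3 u hu h) (fun f => f)
    rw [hueq] at hu'
    have hcons : (Dw.append ρ₁.reverse).support = xt :: (Dw.append ρ₁.reverse).support.tail :=
      support_eq_cons _
    have hnd := hQ.support_nodup
    rw [hcons] at hnd
    exact (List.nodup_cons.mp hnd).1 hu'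
  · intro v hvA hvB
    rw [hmem] at hvB
    rcases hvB with h | h | h
    · exact Or.inl (h4 v hvA h)
    · exact absurd (h5 v hvA h) (fun f => f)
    · exact Or.inr (h6 v hvA h)
end CycProps

namespace CW
variable {r : ℕ}

/-- Two distinct vertices lying in two layers pin the layers to be equal. -/
lemma layer_pin {j j' : Fin r} {v w : CWVert r} (hvw : v ≠ w)
    (h1 : isRow j v ∨ v = cwZ j.castSucc ∨ v = cwZ j.succ)
    (h2 : isRow j' v ∨ v = cwZ j'.castSucc ∨ v = cwZ j'.succ)
    (h3 : isRow j w ∨ w = cwZ j.castSucc ∨ w = cwZ j.succ)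
    (h4 : isRow j' w ∨ w = cwZ j'.castSucc ∨ w = cwZ j'.succ) : j = j' := by
  have hrow : ∀ (u : CWVert r), isRow j u → isRow j' u → j = j' := by
    rintro u ⟨k, rfl⟩ ⟨k', he⟩
    exact (cwU_inj he).1
  have hz : ∀ (u : CWVert r) (i : Fin (r+1)) (jj : Fin r), u = cwZ i →
      (isRow jj u ∨ u = cwZ jj.castSucc ∨ u = cwZ jj.succ) →
      ((i:ℕ) = (jj:ℕ) ∨ (i:ℕ) = (jj:ℕ)+1) := by
    rintro u i jj rfl h
    rcases h with ⟨k, hk⟩ | hk | hk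
    · exact absurd hk.symm cwU_ne_cwZ
    · left; have := cwZ_inj hk; rw [this]; simp
    · right; have := cwZ_inj hk; rw [this]; simp
  rcases vert_cases v with ⟨jv, kv, hv⟩ | ⟨iv, hv⟩ | hv | hv
  · -- v is a u-vertex: both classifications must be rows
    have hr1 : isRow j v := by
      rcases h1 with h | h | h
      · exact h
      · rw [hv] at h; exact absurd h cwU_ne_cwZ
      · rw [hv] at h; exact absurd h cwU_ne_cwZ
    have hr2 : isRow j' v := by
      rcases h2 with h | h | h
      · exact h
      · rw [hv] at h; exact absurd h cwU_ne_cwZ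
      · rw [hv] at h; exact absurd h cwU_ne_cwZ
    exact hrow v hr1 hr2
  · rcases vert_cases w with ⟨jw, kw, hw⟩ | ⟨iw, hw⟩ | hw | hw
    · -- w is a u-vertex
      have hr1 : isRow j w := by
        rcases h3 with h | h | h
        · exact h
        · rw [hw] at h; exact absurd h cwU_ne_cwZ
        · rw [hw] at h; exact absurd h cwU_ne_cwZ
      have hr2 : isRow j' w := by
        rcases h4 with h | h | h
        · exact h
        · rw [hw] at h; exact absurd h cwU_ne_cwZ
        · rw [hw] at h; exact absurd h cwU_ne_cwZ
      exact hrow w hr1 hr2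
    · -- both z's, distinct
      have hne : (iv:ℕ) ≠ (iw:ℕ) := by
        intro he
        exact hvw (by rw [hv, hw, Fin.ext he])
      have b1 := hz v iv j hv h1
      have b2 := hz v iv j' hv h2
      have b3 := hz w iw j hw h3
      have b4 := hz w iw j' hw h4
      exact Fin.ext (by omega)
    · -- w = cwA: impossible classification
      rcases h3 with ⟨k, hk⟩ | hk | hk
      · rw [hw] at hk; exact absurd hk.symm cwU_ne_cwA
      · rw [hw] at hk; exact absurd hk.symm cwZ_ne_cwA
      · rw [hw] at hk; exact absurd hk.symm cwZ_ne_cwA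
    · rcases h3 with ⟨k, hk⟩ | hk | hk
      · rw [hw] at hk; exact absurd hk.symm cwU_ne_cwB
      · rw [hw] at hk; exact absurd hk.symm cwZ_ne_cwB
      · rw [hw] at hk; exact absurd hk.symm cwZ_ne_cwB
  · rcases h1 with ⟨k, hk⟩ | hk | hk
    · rw [hv] at hk; exact absurd hk.symm cwU_ne_cwA
    · rw [hv] at hk; exact absurd hk.symm cwZ_ne_cwA
    · rw [hv] at hk; exact absurd hk.symm cwZ_ne_cwA
  · rcases h1 with ⟨k, hk⟩ | hk | hk
    · rw [hv] at hk; exact absurd hk.symm cwU_ne_cwB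
    · rw [hv] at hk; exact absurd hk.symm cwZ_ne_cwB
    · rw [hv] at hk; exact absurd hk.symm cwZ_ne_cwB

end CW


open CW SimpleGraph.Walk in
/-- A ladder in a condensed wall whose two stringers are continued at one end-rung by
internally disjoint paths to `a` and to a bottleneck vertex `z`, the whole
configuration avoiding `b`, has at most 5 rungs. -/
theorem ladder_with_az_paths_le_five (r n : ℕ)
    (S : SubdivCopy (elemLadder n) (condensedWall r)) (i : Fin n) (s : Bool)
    (hi : (i : ℕ) = 0 ∨ (i : ℕ) + 1 = n)
    (z : CWVert r) (hz : IsBottleneck z)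
    (P₁ : (condensedWall r).Walk (S.branch (i, s)) (cwA r))
    (P₂ : (condensedWall r).Walk (S.branch (i, !s)) z)
    (hP₁ : P₁.IsPath) (hP₂ : P₂.IsPath)
    (hP₁L : ∀ x, x ∈ P₁.support → x ∈ S.verts → x = S.branch (i, s))
    (hP₂L : ∀ x, x ∈ P₂.support → x ∈ S.verts → x = S.branch (i, !s))
    (hP₁₂ : ∀ x, x ∈ P₁.support → x ∉ P₂.support)
    (hbL : cwB r ∉ S.verts) (hbP₁ : cwB r ∉ P₁.support) (hbP₂ : cwB r ∉ P₂.support) :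
    n ≤ 5 := by
  classical
  by_contra hn5
  push_neg at hn5
  obtain ⟨σ, hσ0, hσinj, hσadj⟩ : ∃ σ : ℕ → Fin n,
      σ 0 = i ∧ (∀ t t', t ≤ 5 → t' ≤ 5 → σ t = σ t' → t = t') ∧
      (∀ t, t ≤ 4 → ((σ (t+1) : ℕ) = (σ t : ℕ) + 1 ∨ (σ t : ℕ) = (σ (t+1) : ℕ) + 1)) := by
    rcases hi with h0 | hl
    · refine ⟨fun t => ⟨min t 5, by omega⟩, Fin.ext (by simp only; omega), ?_, ?_⟩
      · intro t t' ht ht' he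
        have := congrArg Fin.val he
        simp only at this
        omega
      · intro t ht
        left
        simp only
        omega
    · refine ⟨fun t => ⟨n - 1 - min t 5, by omega⟩, Fin.ext (by simp only; omega), ?_, ?_⟩
      · intro t t' ht ht' he
        have := congrArg Fin.val he
        simp only at this
        omega
      · intro t ht
        right
        simp only
        omega
  have hrung : ∀ t, t ≤ 5 → (elemLadder n).Adj (σ t, s) (σ t, !s) := by
    intro t ht
    rw [elemLadder, SimpleGraph.fromRel_adj]
    constructor
    · intro he
      have := congrArg Prod.snd he
      simp at this
    · exact Or.inl (Or.inr ⟨rfl, by simp⟩)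
  have hstr : ∀ (t : ℕ) (c : Bool), t ≤ 4 → (elemLadder n).Adj (σ t, c) (σ (t+1), c) := by
    intro t c ht
    have hne : σ t ≠ σ (t+1) := by
      intro he
      have := hσinj t (t+1) (by omega) (by omega) he
      omega
    rw [elemLadder, SimpleGraph.fromRel_adj]
    constructor
    · intro he
      exact hne (congrArg Prod.fst he)
    · rcases hσadj t ht with h | h
      · exact Or.inl (Or.inl ⟨rfl, h⟩)
      · exact Or.inr (Or.inl ⟨rfl, h⟩)
  have hβinj : ∀ p q : Fin n × Bool, S.branch p = S.branch q → p = q :=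
    fun p q h => S.branch_inj h
  have hPne : ∀ (t t' : ℕ) (c c' : Bool), t ≤ 5 → t' ≤ 5 → (t ≠ t' ∨ c ≠ c') →
      ((σ t, c) : Fin n × Bool) ≠ (σ t', c') := by
    intro t t' c c' ht ht' hor he
    rw [Prod.mk.injEq] at he
    rcases hor with h | h
    · exact h (hσinj t t' ht ht' he.1)
    · exact h he.2
  have hβne : ∀ (t t' : ℕ) (c c' : Bool), t ≤ 5 → t' ≤ 5 → (t ≠ t' ∨ c ≠ c') →
      S.branch (σ t, c) ≠ S.branch (σ t', c') := by
    intro t t' c c' ht ht' hor he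
    exact hPne t t' c c' ht ht' hor (hβinj _ _ he)
  have hS2 : ∀ (p q u v : Fin n × Bool), ¬(p = u ∧ q = v) → ¬(p = v ∧ q = u) →
      s(p, q) ≠ s(u, v) := by
    intro p q u v h1 h2 he
    rw [Sym2.eq_iff] at he
    tauto
  have hnb : ∀ {p q : Fin n × Bool} (h : (elemLadder n).Adj p q) (v : CWVert r),
      v ∈ (S.walk h).support → v ≠ cwB r := by
    intro p q h v hv he
    exact hbL (he ▸ S.support_subset_verts h hv)
  have h5 : ∀ {t : ℕ}, t ≤ 4 → t ≤ 5 := fun h => by omega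
  have h5' : ∀ {t : ℕ}, t ≤ 4 → t+1 ≤ 5 := fun h => by omega
  -- the six pairwise junction facts for the walks of one ladder cell
  have hj1 : ∀ (t : ℕ) (ht : t ≤ 4) v, v ∈ (S.walk (hrung t (h5 ht))).support →
      v ∈ (S.walk (hstr t (!s) ht)).support → v = S.branch (σ t, !s) := by
    intro t ht v hv1 hv2
    have hd := S.walk_disj (hrung t (h5 ht)) (hstr t (!s) ht)
      (hS2 _ _ _ _
        (by rintro ⟨he1, -⟩; exact hPne t t s (!s) (h5 ht) (h5 ht) (Or.inr (by simp)) he1)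
        (by rintro ⟨he1, -⟩; exact hPne t (t+1) s (!s) (h5 ht) (h5' ht) (Or.inl (by omega)) he1))
      v hv1 hv2
    rcases hd with ⟨ha | ha, hb | hb⟩
    · exact absurd (ha.symm.trans hb)
        (hβne t t s (!s) (h5 ht) (h5 ht) (Or.inr (by simp)))
    · exact absurd (ha.symm.trans hb)
        (hβne t (t+1) s (!s) (h5 ht) (h5' ht) (Or.inl (by omega)))
    · exact ha
    · exact ha
  have hj2 : ∀ (t : ℕ) (ht : t ≤ 4) v, v ∈ (S.walk (hstr t (!s) ht)).support →
      v ∈ (S.walk (hrung (t+1) (h5' ht))).support → v = S.branch (σ (t+1), !s) := by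
    intro t ht v hv1 hv2
    have hd := S.walk_disj (hstr t (!s) ht) (hrung (t+1) (h5' ht))
      (hS2 _ _ _ _
        (by rintro ⟨he1, -⟩; exact hPne t (t+1) (!s) s (h5 ht) (h5' ht) (Or.inl (by omega)) he1)
        (by rintro ⟨he1, -⟩; exact hPne t (t+1) (!s) (!s) (h5 ht) (h5' ht) (Or.inl (by omega)) he1))
      v hv1 hv2
    rcases hd with ⟨ha | ha, hb | hb⟩
    · exact absurd (ha.symm.trans hb)
        (hβne t (t+1) (!s) s (h5 ht) (h5' ht) (Or.inl (by omega)))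
    · exact hb
    · exact ha
    · exact ha
  have hj3 : ∀ (t : ℕ) (ht : t ≤ 4) v, v ∈ (S.walk (hrung t (h5 ht))).support →
      v ∈ (S.walk (hrung (t+1) (h5' ht))).support → False := by
    intro t ht v hv1 hv2
    have hd := S.walk_disj (hrung t (h5 ht)) (hrung (t+1) (h5' ht))
      (hS2 _ _ _ _
        (by rintro ⟨he1, -⟩; exact hPne t (t+1) s s (h5 ht) (h5' ht) (Or.inl (by omega)) he1)
        (by rintro ⟨he1, -⟩; exact hPne t (t+1) s (!s) (h5 ht) (h5' ht) (Or.inl (by omega)) he1))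
      v hv1 hv2
    rcases hd with ⟨ha | ha, hb | hb⟩ <;>
      exact absurd (ha.symm.trans hb)
        (hβne _ _ _ _ (by first | exact h5 ht | exact h5' ht)
          (by first | exact h5 ht | exact h5' ht) (Or.inl (by omega)))
  have hj4 : ∀ (t : ℕ) (ht : t ≤ 4) v, v ∈ (S.walk (hstr t s ht)).support →
      v ∈ (S.walk (hrung t (h5 ht))).support → v = S.branch (σ t, s) := by
    intro t ht v hv1 hv2
    have hd := S.walk_disj (hstr t s ht) (hrung t (h5 ht))
      (hS2 _ _ _ _
        (by rintro ⟨-, he2⟩; exact hPne (t+1) t s (!s) (h5' ht) (h5 ht) (Or.inl (by omega)) he2)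
        (by rintro ⟨he1, -⟩; exact hPne t t s (!s) (h5 ht) (h5 ht) (Or.inr (by simp)) he1))
      v hv1 hv2
    rcases hd with ⟨ha | ha, hb | hb⟩
    · exact ha
    · exact ha
    · exact absurd (ha.symm.trans hb)
        (hβne (t+1) t s s (h5' ht) (h5 ht) (Or.inl (by omega)))
    · exact absurd (ha.symm.trans hb)
        (hβne (t+1) t s (!s) (h5' ht) (h5 ht) (Or.inl (by omega)))
  have hj5 : ∀ (t : ℕ) (ht : t ≤ 4) v, v ∈ (S.walk (hstr t s ht)).support →
      v ∈ (S.walk (hstr t (!s) ht)).support → False := by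
    intro t ht v hv1 hv2
    have hd := S.walk_disj (hstr t s ht) (hstr t (!s) ht)
      (hS2 _ _ _ _
        (by rintro ⟨he1, -⟩; exact hPne t t s (!s) (h5 ht) (h5 ht) (Or.inr (by simp)) he1)
        (by rintro ⟨he1, -⟩; exact hPne t (t+1) s (!s) (h5 ht) (h5' ht) (Or.inl (by omega)) he1))
      v hv1 hv2
    rcases hd with ⟨ha | ha, hb | hb⟩
    · exact absurd (ha.symm.trans hb)
        (hβne t t s (!s) (h5 ht) (h5 ht) (Or.inr (by simp)))
    · exact absurd (ha.symm.trans hb)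
        (hβne t (t+1) s (!s) (h5 ht) (h5' ht) (Or.inl (by omega)))
    · exact absurd (ha.symm.trans hb)
        (hβne (t+1) t s (!s) (h5' ht) (h5 ht) (Or.inl (by omega)))
    · exact absurd (ha.symm.trans hb)
        (hβne (t+1) (t+1) s (!s) (h5' ht) (h5' ht) (Or.inr (by simp)))
  have hj6 : ∀ (t : ℕ) (ht : t ≤ 4) v, v ∈ (S.walk (hstr t s ht)).support →
      v ∈ (S.walk (hrung (t+1) (h5' ht))).support → v = S.branch (σ (t+1), s) := by
    intro t ht v hv1 hv2
    have hd := S.walk_disj (hstr t s ht) (hrung (t+1) (h5' ht))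
      (hS2 _ _ _ _
        (by rintro ⟨he1, -⟩; exact hPne t (t+1) s s (h5 ht) (h5' ht) (Or.inl (by omega)) he1)
        (by rintro ⟨he1, -⟩; exact hPne t (t+1) s (!s) (h5 ht) (h5' ht) (Or.inl (by omega)) he1))
      v hv1 hv2
    rcases hd with ⟨ha | ha, hb | hb⟩
    · exact absurd (ha.symm.trans hb)
        (hβne t (t+1) s s (h5 ht) (h5' ht) (Or.inl (by omega)))
    · exact absurd (ha.symm.trans hb)
        (hβne t (t+1) s (!s) (h5 ht) (h5' ht) (Or.inl (by omega)))
    · exact ha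
    · exact absurd (ha.symm.trans hb)
        (hβne (t+1) (t+1) s (!s) (h5' ht) (h5' ht) (Or.inr (by simp)))
  have hcyc : ∀ (t : ℕ) (ht : t ≤ 4),
      ((S.walk (hrung t (h5 ht))).append ((S.walk (hstr t (!s) ht)).append
        (S.walk (hrung (t+1) (h5' ht))).reverse)).IsPath ∧
      (∀ v, v ∈ (S.walk (hstr t s ht)).support →
        v ∈ ((S.walk (hrung t (h5 ht))).append ((S.walk (hstr t (!s) ht)).append
          (S.walk (hrung (t+1) (h5' ht))).reverse)).support →
        v = S.branch (σ t, s) ∨ v = S.branch (σ (t+1), s)) ∧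
      (∀ v, v ∈ ((S.walk (hrung t (h5 ht))).append ((S.walk (hstr t (!s) ht)).append
          (S.walk (hrung (t+1) (h5' ht))).reverse)).support ↔
        (v ∈ (S.walk (hrung t (h5 ht))).support ∨ v ∈ (S.walk (hstr t (!s) ht)).support ∨
         v ∈ (S.walk (hrung (t+1) (h5' ht))).support)) := by
    intro t ht
    exact cyc_props _ _ _ _ (S.walk_isPath _) (S.walk_isPath _) (S.walk_isPath _)
      (S.walk_isPath _) (hj1 t ht) (hj2 t ht) (hj3 t ht) (hj4 t ht) (hj5 t ht) (hj6 t ht)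
      (hβne t (t+1) (!s) (!s) (h5 ht) (h5' ht) (Or.inl (by omega)))
  have hloc : ∀ (t : ℕ) (ht : t ≤ 4),
      (∀ v, (v ∈ (S.walk (hstr t s ht)).support ∨ v ∈ (S.walk (hrung t (h5 ht))).support ∨
        v ∈ (S.walk (hstr t (!s) ht)).support ∨ v ∈ (S.walk (hrung (t+1) (h5' ht))).support) →
        v ≠ cwA r) →
      ∃ j : Fin r,
        (∀ v, (v ∈ (S.walk (hstr t s ht)).support ∨ v ∈ (S.walk (hrung t (h5 ht))).support ∨
          v ∈ (S.walk (hstr t (!s) ht)).support ∨ v ∈ (S.walk (hrung (t+1) (h5' ht))).support) →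
          isRow j v ∨ v = cwZ j.castSucc ∨ v = cwZ j.succ) ∧
        ∃ ii : Fin (r+1),
          (cwZ ii ∈ (S.walk (hstr t s ht)).support ∨ cwZ ii ∈ (S.walk (hrung t (h5 ht))).support ∨
           cwZ ii ∈ (S.walk (hstr t (!s) ht)).support ∨
           cwZ ii ∈ (S.walk (hrung (t+1) (h5' ht))).support) ∧
          ((ii:ℕ) = (j:ℕ) ∨ (ii:ℕ) = (j:ℕ)+1) := by
    intro t ht hA
    obtain ⟨hBp, hTB, hmem⟩ := hcyc t ht
    have hiff : ∀ v : CWVert r, (v ∈ (S.walk (hstr t s ht)).support ∨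
        v ∈ ((S.walk (hrung t (h5 ht))).append ((S.walk (hstr t (!s) ht)).append
          (S.walk (hrung (t+1) (h5' ht))).reverse)).support) ↔
        (v ∈ (S.walk (hstr t s ht)).support ∨ v ∈ (S.walk (hrung t (h5 ht))).support ∨
         v ∈ (S.walk (hstr t (!s) ht)).support ∨
         v ∈ (S.walk (hrung (t+1) (h5' ht))).support) := by
      intro v
      rw [hmem v]
    obtain ⟨j, hj, ii, hii, hiv⟩ := cycle_localize (S.walk (hstr t s ht))
      ((S.walk (hrung t (h5 ht))).append ((S.walk (hstr t (!s) ht)).append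
        (S.walk (hrung (t+1) (h5' ht))).reverse))
      (S.walk_isPath _) hBp
      (hβne t (t+1) s s (h5 ht) (h5' ht) (Or.inl (by omega)))
      hTB
      (fun v hv => ⟨hA v ((hiff v).mp hv), by
        rcases (hiff v).mp hv with h | h | h | h
        exacts [hnb _ v h, hnb _ v h, hnb _ v h, hnb _ v h]⟩)
      (S.branch (σ t, !s))
      ((hmem _).mpr (Or.inl (end_mem_support _)))
      (hβne t t (!s) s (h5 ht) (h5 ht) (Or.inr (by simp)))
      (hβne t (t+1) (!s) s (h5 ht) (h5' ht) (Or.inl (by omega)))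
    exact ⟨j, fun v hv => hj v ((hiff v).mpr hv), ii, (hiff _).mp hii, hiv⟩
  have hMelim : ∀ (t : ℕ) (ht : t ≤ 4) (v : CWVert r),
      (v ∈ (S.walk (hstr t s ht)).support ∨ v ∈ (S.walk (hrung t (h5 ht))).support ∨
       v ∈ (S.walk (hstr t (!s) ht)).support ∨ v ∈ (S.walk (hrung (t+1) (h5' ht))).support) →
      ∃ (t1 t2 : ℕ) (c1 c2 : Bool) (h : (elemLadder n).Adj (σ t1, c1) (σ t2, c2)),
        (t1 = t ∨ t1 = t+1) ∧ (t2 = t ∨ t2 = t+1) ∧ v ∈ (S.walk h).support := by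
    intro t ht v hv
    rcases hv with h | h | h | h
    · exact ⟨t, t+1, s, s, hstr t s ht, Or.inl rfl, Or.inr rfl, h⟩
    · exact ⟨t, t, s, !s, hrung t (h5 ht), Or.inl rfl, Or.inl rfl, h⟩
    · exact ⟨t, t+1, !s, !s, hstr t (!s) ht, Or.inl rfl, Or.inr rfl, h⟩
    · exact ⟨t+1, t+1, s, !s, hrung (t+1) (h5' ht), Or.inr rfl, Or.inr rfl, h⟩
  have h2apart : ∀ (t t' : ℕ) (ht : t ≤ 4) (ht' : t' ≤ 4), t + 2 ≤ t' →
      ∀ v : CWVert r,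
      (v ∈ (S.walk (hstr t s ht)).support ∨ v ∈ (S.walk (hrung t (h5 ht))).support ∨
       v ∈ (S.walk (hstr t (!s) ht)).support ∨ v ∈ (S.walk (hrung (t+1) (h5' ht))).support) →
      (v ∈ (S.walk (hstr t' s ht')).support ∨ v ∈ (S.walk (hrung t' (h5 ht'))).support ∨
       v ∈ (S.walk (hstr t' (!s) ht')).support ∨
       v ∈ (S.walk (hrung (t'+1) (h5' ht'))).support) → False := by
    intro t t' ht ht' htt v hv hv'
    obtain ⟨t1, t2, c1, c2, h, ha1, ha2, hm⟩ := hMelim t ht v hv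
    obtain ⟨t1', t2', c1', c2', h', hb1, hb2, hm'⟩ := hMelim t' ht' v hv'
    have hne : s((σ t1, c1), (σ t2, c2)) ≠ s((σ t1', c1'), (σ t2', c2')) := by
      apply hS2
      · rintro ⟨he1, -⟩
        exact hPne t1 t1' c1 c1' (by omega) (by omega) (Or.inl (by omega)) he1
      · rintro ⟨he1, -⟩
        exact hPne t1 t2' c1 c2' (by omega) (by omega) (Or.inl (by omega)) he1
    obtain ⟨hc1, hc2⟩ := S.walk_disj h h' hne v hm hm'
    rcases hc1 with hc | hc <;> rcases hc2 with hc' | hc' <;>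
      exact absurd (hc.symm.trans hc')
        (hβne _ _ _ _ (by omega) (by omega) (Or.inl (by omega)))
  have hshared : ∀ (t : ℕ) (ht : t ≤ 4) (ht1 : t+1 ≤ 4) (v : CWVert r),
      (v ∈ (S.walk (hstr t s ht)).support ∨ v ∈ (S.walk (hrung t (h5 ht))).support ∨
       v ∈ (S.walk (hstr t (!s) ht)).support ∨ v ∈ (S.walk (hrung (t+1) (h5' ht))).support) →
      (v ∈ (S.walk (hstr (t+1) s ht1)).support ∨
       v ∈ (S.walk (hrung (t+1) (h5 ht1))).support ∨
       v ∈ (S.walk (hstr (t+1) (!s) ht1)).support ∨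
       v ∈ (S.walk (hrung (t+1+1) (h5' ht1))).support) →
      v ∈ (S.walk (hrung (t+1) (h5' ht))).support := by
    intro t ht ht1 v hv hv'
    obtain ⟨t1, t2, c1, c2, h, ha1, ha2, hm⟩ := hMelim t ht v hv
    rcases hv' with h' | h' | h' | h'
    · -- v on A_{t+1}
      have hne : s((σ t1, c1), (σ t2, c2)) ≠ s((σ (t+1), s), (σ (t+2), s)) := by
        apply hS2
        · rintro ⟨-, he2⟩
          exact hPne t2 (t+2) c2 s (by omega) (by omega) (Or.inl (by omega)) he2
        · rintro ⟨he1, -⟩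
          exact hPne t1 (t+2) c1 s (by omega) (by omega) (Or.inl (by omega)) he1
      obtain ⟨hc1, hc2⟩ := S.walk_disj h (hstr (t+1) s ht1) hne v hm h'
      rcases hc2 with hc' | hc'
      · rw [hc']
        exact start_mem_support _
      · rcases hc1 with hc | hc <;>
          exact absurd (hc.symm.trans hc')
            (hβne _ _ _ _ (by omega) (by omega) (Or.inl (by omega)))
    · exact h'
    · have hne : s((σ t1, c1), (σ t2, c2)) ≠ s((σ (t+1), !s), (σ (t+2), !s)) := by
        apply hS2
        · rintro ⟨-, he2⟩
          exact hPne t2 (t+2) c2 (!s) (by omega) (by omega) (Or.inl (by omega)) he2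
        · rintro ⟨he1, -⟩
          exact hPne t1 (t+2) c1 (!s) (by omega) (by omega) (Or.inl (by omega)) he1
      obtain ⟨hc1, hc2⟩ := S.walk_disj h (hstr (t+1) (!s) ht1) hne v hm h'
      rcases hc2 with hc' | hc'
      · rw [hc']
        exact end_mem_support _
      · rcases hc1 with hc | hc <;>
          exact absurd (hc.symm.trans hc')
            (hβne _ _ _ _ (by omega) (by omega) (Or.inl (by omega)))
    · have hne : s((σ t1, c1), (σ t2, c2)) ≠ s((σ (t+2), s), (σ (t+2), !s)) := by
        apply hS2
        · rintro ⟨he1, -⟩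
          exact hPne t1 (t+2) c1 s (by omega) (by omega) (Or.inl (by omega)) he1
        · rintro ⟨he1, -⟩
          exact hPne t1 (t+2) c1 (!s) (by omega) (by omega) (Or.inl (by omega)) he1
      obtain ⟨hc1, hc2⟩ := S.walk_disj h (hrung (t+2) (h5' ht1)) hne v hm h'
      rcases hc1 with hc | hc <;> rcases hc2 with hc' | hc' <;>
        exact absurd (hc.symm.trans hc')
          (hβne _ _ _ _ (by omega) (by omega) (Or.inl (by omega)))
  have chain : ∀ (t : ℕ) (ht : t ≤ 4) (ht1 : t+1 ≤ 4)
      (ja jb : Fin r)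
      (hja : ∀ v, (v ∈ (S.walk (hstr t s ht)).support ∨
        v ∈ (S.walk (hrung t (h5 ht))).support ∨
        v ∈ (S.walk (hstr t (!s) ht)).support ∨
        v ∈ (S.walk (hrung (t+1) (h5' ht))).support) →
        isRow ja v ∨ v = cwZ ja.castSucc ∨ v = cwZ ja.succ)
      (hjb : ∀ v, (v ∈ (S.walk (hstr (t+1) s ht1)).support ∨
        v ∈ (S.walk (hrung (t+1) (h5 ht1))).support ∨
        v ∈ (S.walk (hstr (t+1) (!s) ht1)).support ∨
        v ∈ (S.walk (hrung (t+1+1) (h5' ht1))).support) →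
        isRow jb v ∨ v = cwZ jb.castSucc ∨ v = cwZ jb.succ), ja = jb := by
    intro t ht ht1 ja jb hja hjb
    refine layer_pin (v := S.branch (σ (t+1), s)) (w := S.branch (σ (t+1), !s))
      (hβne (t+1) (t+1) s (!s) (h5' ht) (h5' ht) (Or.inr (by simp))) ?_ ?_ ?_ ?_
    · exact hja _ (Or.inl (end_mem_support _))
    · exact hjb _ (Or.inl (start_mem_support _))
    · exact hja _ (Or.inr (Or.inr (Or.inl (end_mem_support _))))
    · exact hjb _ (Or.inr (Or.inl (end_mem_support _)))
  by_cases haV : cwA r ∈ S.verts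
  · -- Case 2: `a` is the branch vertex at the end of the ladder
    have ha : cwA r = S.branch (σ 0, s) := by
      rw [hσ0]
      exact hP₁L _ (end_mem_support P₁) haV
    have hA : ∀ (t : ℕ) (ht : t ≤ 4), 1 ≤ t → ∀ v,
        (v ∈ (S.walk (hstr t s ht)).support ∨ v ∈ (S.walk (hrung t (h5 ht))).support ∨
         v ∈ (S.walk (hstr t (!s) ht)).support ∨
         v ∈ (S.walk (hrung (t+1) (h5' ht))).support) → v ≠ cwA r := by
      intro t ht h1t v hv he
      obtain ⟨t1, t2, c1, c2, h, ha1, ha2, hm⟩ := hMelim t ht v hv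
      rw [he, ha] at hm
      rcases S.branch_not_interior h (σ 0, s) hm with hc | hc
      · have h0 := congrArg Prod.fst hc
        have := hσinj 0 t1 (by omega) (by omega) h0
        omega
      · have h0 := congrArg Prod.fst hc
        have := hσinj 0 t2 (by omega) (by omega) h0
        omega
    obtain ⟨j1, hc1, i1, hi1, hv1⟩ := hloc 1 (by omega) (hA 1 (by omega) (by omega))
    obtain ⟨j2, hc2, i2, hi2, hv2⟩ := hloc 2 (by omega) (hA 2 (by omega) (by omega))
    obtain ⟨j3, hc3, i3, hi3, hv3⟩ := hloc 3 (by omega) (hA 3 (by omega) (by omega))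
    obtain ⟨j4, hc4, i4, hi4, hv4⟩ := hloc 4 (by omega) (hA 4 (by omega) (by omega))
    have e21 : j2 = j1 := (chain 1 (by omega) (by omega) j1 j2 hc1 hc2).symm
    rw [e21] at hc2 hv2
    have e31 : j3 = j1 := (chain 2 (by omega) (by omega) j1 j3 hc2 hc3).symm
    rw [e31] at hc3 hv3
    have e41 : j4 = j1 := (chain 3 (by omega) (by omega) j1 j4 hc3 hc4).symm
    rw [e41] at hc4 hv4
    have d13 : (i1:ℕ) ≠ (i3:ℕ) := by
      intro h
      have hmem := hi1
      rw [show i1 = i3 from Fin.ext h] at hmem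
      exact h2apart 1 3 (by omega) (by omega) (by omega) (cwZ i3) hmem hi3
    have d14 : (i1:ℕ) ≠ (i4:ℕ) := by
      intro h
      have hmem := hi1
      rw [show i1 = i4 from Fin.ext h] at hmem
      exact h2apart 1 4 (by omega) (by omega) (by omega) (cwZ i4) hmem hi4
    have d24 : (i2:ℕ) ≠ (i4:ℕ) := by
      intro h
      have hmem := hi2
      rw [show i2 = i4 from Fin.ext h] at hmem
      exact h2apart 2 4 (by omega) (by omega) (by omega) (cwZ i4) hmem hi4
    have hvi2 : (i2:ℕ) = (i1:ℕ) := by omega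
    have hvi4 : (i4:ℕ) = (i3:ℕ) := by omega
    have hza : cwZ i1 ∈ (S.walk (hrung 2 (h5' (by omega : (1:ℕ) ≤ 4)))).support := by
      refine hshared 1 (by omega) (by omega) (cwZ i1) hi1 ?_
      rw [show i1 = i2 from Fin.ext hvi2.symm]
      exact hi2
    have hzb : cwZ i3 ∈ (S.walk (hrung 4 (h5' (by omega : (3:ℕ) ≤ 4)))).support := by
      refine hshared 3 (by omega) (by omega) (cwZ i3) hi3 ?_
      rw [show i3 = i4 from Fin.ext hvi4.symm]
      exact hi4
    have hlay : ∀ v : CWVert r, (v = cwZ j1.castSucc ∨ v = cwZ j1.succ) →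
        v = cwZ i1 ∨ v = cwZ i3 := by
      intro v hv
      rcases hv with rfl | rfl
      · have hor : ((i1:ℕ) = (j1.castSucc:ℕ) ∨ (i3:ℕ) = (j1.castSucc:ℕ)) := by
          simp only [Fin.coe_castSucc]
          omega
        rcases hor with h | h
        · exact Or.inl (by rw [show j1.castSucc = i1 from Fin.ext h.symm])
        · exact Or.inr (by rw [show j1.castSucc = i3 from Fin.ext h.symm])
      · have hor : ((i1:ℕ) = (j1.succ:ℕ) ∨ (i3:ℕ) = (j1.succ:ℕ)) := by
          simp only [Fin.val_succ]
          omega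
        rcases hor with h | h
        · exact Or.inl (by rw [show j1.succ = i1 from Fin.ext h.symm])
        · exact Or.inr (by rw [show j1.succ = i3 from Fin.ext h.symm])
    have hnotend : ∀ (v : CWVert r), (v = cwZ i1 ∨ v = cwZ i3) →
        ∀ (t1 t2 : ℕ) (c1 c2 : Bool) (h' : (elemLadder n).Adj (σ t1, c1) (σ t2, c2)),
        t1 ≤ 1 → t2 ≤ 1 → v ∈ (S.walk h').support → False := by
      intro v hv t1 t2 c1 c2 h' ht1 ht2 hm'
      rcases hv with rfl | rfl
      · have hne : s(((σ 2 : Fin n), s), ((σ 2 : Fin n), !s)) ≠ s((σ t1, c1), (σ t2, c2)) := by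
          apply hS2
          · rintro ⟨he1, -⟩
            exact hPne 2 t1 s c1 (by omega) (by omega) (Or.inl (by omega)) he1
          · rintro ⟨he1, -⟩
            exact hPne 2 t2 s c2 (by omega) (by omega) (Or.inl (by omega)) he1
        obtain ⟨hd1, hd2⟩ := S.walk_disj (hrung 2 (h5' (by omega : (1:ℕ) ≤ 4))) h' hne _ hza hm'
        rcases hd1 with hd | hd <;> rcases hd2 with hd' | hd' <;>
          exact absurd (hd.symm.trans hd')
            (hβne _ _ _ _ (by omega) (by omega) (Or.inl (by omega)))
      · have hne : s(((σ 4 : Fin n), s), ((σ 4 : Fin n), !s)) ≠ s((σ t1, c1), (σ t2, c2)) := by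
          apply hS2
          · rintro ⟨he1, -⟩
            exact hPne 4 t1 s c1 (by omega) (by omega) (Or.inl (by omega)) he1
          · rintro ⟨he1, -⟩
            exact hPne 4 t2 s c2 (by omega) (by omega) (Or.inl (by omega)) he1
        obtain ⟨hd1, hd2⟩ := S.walk_disj (hrung 4 (h5' (by omega : (3:ℕ) ≤ 4))) h' hne _ hzb hm'
        rcases hd1 with hd | hd <;> rcases hd2 with hd' | hd' <;>
          exact absurd (hd.symm.trans hd')
            (hβne _ _ _ _ (by omega) (by omega) (Or.inl (by omega)))
    have hznotb : ∀ (c : Bool) (v : CWVert r), (v = cwZ i1 ∨ v = cwZ i3) →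
        S.branch (σ 1, c) ≠ v := by
      intro c v hv he
      rcases hv with rfl | rfl
      · have hm : S.branch (σ 1, c) ∈ (S.walk (hrung 2 (h5' (by omega : (1:ℕ) ≤ 4)))).support := by
          rw [he]; exact hza
        rcases S.branch_not_interior _ (σ 1, c) hm with hc | hc
        · have h0 := congrArg Prod.fst hc
          have := hσinj 1 2 (by omega) (by omega) h0
          omega
        · have h0 := congrArg Prod.fst hc
          have := hσinj 1 2 (by omega) (by omega) h0
          omega
      · have hm : S.branch (σ 1, c) ∈ (S.walk (hrung 4 (h5' (by omega : (3:ℕ) ≤ 4)))).support := by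
          rw [he]; exact hzb
        rcases S.branch_not_interior _ (σ 1, c) hm with hc | hc
        · have h0 := congrArg Prod.fst hc
          have := hσinj 1 4 (by omega) (by omega) h0
          omega
        · have h0 := congrArg Prod.fst hc
          have := hσinj 1 4 (by omega) (by omega) h0
          omega
    have hGrow : ∀ c : Bool, isRow j1 (S.branch (σ 1, c)) := by
      intro c
      have hcc : c = s ∨ c = !s := by
        rcases c <;> rcases s <;> simp
      have hmem : S.branch (σ 1, c) ∈ (S.walk (hstr 1 s (by omega : (1:ℕ) ≤ 4))).support ∨
          S.branch (σ 1, c) ∈ (S.walk (hrung 1 (h5 (by omega : (1:ℕ) ≤ 4)))).support ∨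
          S.branch (σ 1, c) ∈ (S.walk (hstr 1 (!s) (by omega : (1:ℕ) ≤ 4))).support ∨
          S.branch (σ 1, c) ∈ (S.walk (hrung 2 (h5' (by omega : (1:ℕ) ≤ 4)))).support := by
        rcases hcc with rfl | rfl
        · exact Or.inr (Or.inl (start_mem_support _))
        · exact Or.inr (Or.inl (end_mem_support _))
      rcases hc1 _ hmem with hr | hzz | hzz
      · exact hr
      · exact absurd hzz (hznotb c _ (hlay _ (Or.inl rfl)))
      · exact absurd hzz (hznotb c _ (hlay _ (Or.inr rfl)))
    have havoid : ∀ (t1 t2 : ℕ) (c1 c2 : Bool) (h' : (elemLadder n).Adj (σ t1, c1) (σ t2, c2)),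
        t1 ≤ 1 → t2 ≤ 1 → ∀ v, v ∈ (S.walk h').support →
        v ≠ cwZ j1.castSucc ∧ v ≠ cwZ j1.succ ∧ v ≠ cwB r := by
      intro t1 t2 c1 c2 h' ht1 ht2 v hv
      refine ⟨?_, ?_, hnb h' v hv⟩
      · intro he
        exact hnotend v (hlay v (Or.inl he)) t1 t2 c1 c2 h' ht1 ht2 hv
      · intro he
        exact hnotend v (hlay v (Or.inr he)) t1 t2 c1 c2 h' ht1 ht2 hv
    -- walk from G_t backwards along D₀
    have hD0 := entry ((S.walk (hstr 0 (!s) (by omega : (0:ℕ) ≤ 4))).reverse) (hGrow (!s))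
      (fun v hv => havoid 0 1 (!s) (!s) (hstr 0 (!s) (by omega)) (by omega) (by omega) v
        (mem_rev_support.mp hv))
    have hw0row : isRow j1 (S.branch (σ 0, !s)) := by
      rcases hD0 with h | ⟨haMem, -⟩
      · exact h
      · exfalso
        have hm : S.branch (σ 0, s) ∈ (S.walk (hstr 0 (!s) (by omega : (0:ℕ) ≤ 4))).support := by
          rw [← ha]; exact mem_rev_support.mp haMem
        rcases S.branch_not_interior _ (σ 0, s) hm with hc | hc
        · have h0 := congrArg Prod.snd hc
          simp at h0
        · have h0 := congrArg Prod.fst hc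
          have := hσinj 0 1 (by omega) (by omega) h0
          omega
    have hρ0 := entry ((S.walk (hrung 0 (h5 (by omega : (0:ℕ) ≤ 4)))).reverse) hw0row
      (fun v hv => havoid 0 0 s (!s) (hrung 0 (h5 (by omega))) (by omega) (by omega) v
        (mem_rev_support.mp hv))
    obtain ⟨k0, hk0, hmem0⟩ :
        ∃ k0 : Fin (2*r), (k0:ℕ) = 0 ∧
          cwU j1 k0 ∈ (S.walk (hrung 0 (h5 (by omega : (0:ℕ) ≤ 4)))).support := by
      rcases hρ0 with hrowa | ⟨-, k0, hk0, hm⟩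
      · exfalso
        obtain ⟨k, hk⟩ := hrowa
        exact cwU_ne_cwA ((ha.trans hk).symm)
      · exact ⟨k0, hk0, mem_rev_support.mp hm⟩
    have hA0 := entry ((S.walk (hstr 0 s (by omega : (0:ℕ) ≤ 4))).reverse) (hGrow s)
      (fun v hv => havoid 0 1 s s (hstr 0 s (by omega)) (by omega) (by omega) v
        (mem_rev_support.mp hv))
    obtain ⟨k0', hk0', hmemA⟩ :
        ∃ k0' : Fin (2*r), (k0':ℕ) = 0 ∧
          cwU j1 k0' ∈ (S.walk (hstr 0 s (by omega : (0:ℕ) ≤ 4))).support := by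
      rcases hA0 with hrowa | ⟨-, k0', hk0', hm⟩
      · exfalso
        obtain ⟨k, hk⟩ := hrowa
        exact cwU_ne_cwA ((ha.trans hk).symm)
      · exact ⟨k0', hk0', mem_rev_support.mp hm⟩
    rw [show k0' = k0 from Fin.ext (by omega)] at hmemA
    have hne : s(((σ 0 : Fin n), s), ((σ 0 : Fin n), !s)) ≠ s(((σ 0 : Fin n), s), ((σ 1 : Fin n), s)) := by
      apply hS2
      · rintro ⟨-, he2⟩
        exact hPne 0 1 (!s) s (by omega) (by omega) (Or.inl (by omega)) he2
      · rintro ⟨he1, -⟩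
        exact hPne 0 1 s s (by omega) (by omega) (Or.inl (by omega)) he1
    obtain ⟨hd1, hd2⟩ := S.walk_disj (hrung 0 (h5 (by omega : (0:ℕ) ≤ 4)))
      (hstr 0 s (by omega : (0:ℕ) ≤ 4)) hne (cwU j1 k0) hmem0 hmemA
    rcases hd1 with hd | hd
    · exact cwU_ne_cwA (hd.trans ha.symm)
    rcases hd2 with hd' | hd'
    · exact cwU_ne_cwA (hd'.trans ha.symm)
    · exact hβne 0 1 (!s) s (by omega) (by omega) (Or.inl (by omega)) (hd.symm.trans hd')
  · -- Case 1: `a` is not on the ladder at all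
    have hA : ∀ (t : ℕ) (ht : t ≤ 4) v,
        (v ∈ (S.walk (hstr t s ht)).support ∨ v ∈ (S.walk (hrung t (h5 ht))).support ∨
         v ∈ (S.walk (hstr t (!s) ht)).support ∨
         v ∈ (S.walk (hrung (t+1) (h5' ht))).support) → v ≠ cwA r := by
      intro t ht v hv he
      obtain ⟨t1, t2, c1, c2, h, ha1, ha2, hm⟩ := hMelim t ht v hv
      exact haV (he ▸ S.support_subset_verts h hm)
    obtain ⟨j0, hc0, i0, hi0, hv0⟩ := hloc 0 (by omega) (hA 0 (by omega))
    obtain ⟨j1, hc1, i1, hi1, hv1⟩ := hloc 1 (by omega) (hA 1 (by omega))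
    obtain ⟨j2, hc2, i2, hi2, hv2⟩ := hloc 2 (by omega) (hA 2 (by omega))
    obtain ⟨j3, hc3, i3, hi3, hv3⟩ := hloc 3 (by omega) (hA 3 (by omega))
    obtain ⟨j4, hc4, i4, hi4, hv4⟩ := hloc 4 (by omega) (hA 4 (by omega))
    have e10 : j1 = j0 := (chain 0 (by omega) (by omega) j0 j1 hc0 hc1).symm
    rw [e10] at hc1 hv1
    have e20 : j2 = j0 := (chain 1 (by omega) (by omega) j0 j2 hc1 hc2).symm
    rw [e20] at hc2 hv2
    have e30 : j3 = j0 := (chain 2 (by omega) (by omega) j0 j3 hc2 hc3).symm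
    rw [e30] at hc3 hv3
    have e40 : j4 = j0 := (chain 3 (by omega) (by omega) j0 j4 hc3 hc4).symm
    rw [e40] at hc4 hv4
    have hor : (i0:ℕ) = (i2:ℕ) ∨ (i0:ℕ) = (i4:ℕ) ∨ (i2:ℕ) = (i4:ℕ) := by omega
    rcases hor with h | h | h
    · have hmem := hi0
      rw [show i0 = i2 from Fin.ext h] at hmem
      exact h2apart 0 2 (by omega) (by omega) (by omega) (cwZ i2) hmem hi2
    · have hmem := hi0
      rw [show i0 = i4 from Fin.ext h] at hmem
      exact h2apart 0 4 (by omega) (by omega) (by omega) (cwZ i4) hmem hi4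
    · have hmem := hi2
      rw [show i2 = i4 from Fin.ext h] at hmem
      exact h2apart 2 4 (by omega) (by omega) (by omega) (cwZ i4) hmem hi4
end

section
/- Let T be a tree, let k, m be positive integers, and let f : V(T) → {0,1} be a mark on T with at least 2mk marked vertices. Then there exist edge-disjoint subtrees T_1, …, T_k of T with T_1 ∪ … ∪ T_k = T, together with pairwise disjoint sets A_1, …, A_k of marked vertices such that |A_p| ≥ m and A_p ⊆ V(T_p) for every p ∈ [k]. -/
open SimpleGraph

section TreeDecompHelpers

open Finset

variable {V : Type} {T : SimpleGraph V}


lemma acyclic_coe (hT : T.IsAcyclic) (H : T.Subgraph) : H.coe.IsAcyclic := by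
  intro v c hc
  exact hT (c.map H.hom) (hc.map Subtype.val_injective)

lemma two_nbrs {a b x : V} (p : T.Walk a b) (hp : p.IsPath) (hx : x ∈ p.support)
    (hxa : x ≠ a) (hxb : x ≠ b) :
    ∃ y z, y ≠ z ∧ p.toSubgraph.Adj x y ∧ p.toSubgraph.Adj x z := by
  induction p with
  | nil => simp at hx; exact absurd hx hxa
  | @cons a c b h q ih =>
    rw [SimpleGraph.Walk.support_cons] at hx
    rcases List.mem_cons.mp hx with rfl | hx'
    · exact absurd rfl hxa
    by_cases hxc : x = c
    · subst hxc
      cases q with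
      | nil => exact absurd rfl hxb
      | @cons _ d _ h' q' =>
        refine ⟨a, d, ?_, ?_, ?_⟩
        · intro had
          have h2 := (SimpleGraph.Walk.cons_isPath_iff h (SimpleGraph.Walk.cons h' q')).mp hp
          refine h2.2 ?_
          rw [SimpleGraph.Walk.support_cons]
          exact List.mem_cons_of_mem _ (had ▸ q'.start_mem_support)
        · have h1 : (T.subgraphOfAdj h).Adj x a := by
            rw [SimpleGraph.subgraphOfAdj_adj]; exact Sym2.eq_swap
          exact SimpleGraph.Subgraph.sup_adj.mpr (Or.inl h1)
        · have h1 : (T.subgraphOfAdj h').Adj x d := by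
            rw [SimpleGraph.subgraphOfAdj_adj]
          have h2 : (SimpleGraph.Walk.cons h' q').toSubgraph.Adj x d :=
            SimpleGraph.Subgraph.sup_adj.mpr (Or.inl h1)
          exact SimpleGraph.Subgraph.sup_adj.mpr (Or.inr h2)
    · obtain ⟨y, z, hyz, h1, h2⟩ := ih hp.of_cons hx' hxc hxb
      exact ⟨y, z, hyz, SimpleGraph.Subgraph.sup_adj.mpr (Or.inr h1),
        SimpleGraph.Subgraph.sup_adj.mpr (Or.inr h2)⟩

open SimpleGraph.Walk in
lemma exists_leaf [Fintype V] (hT : T.IsAcyclic) (H : T.Subgraph)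
    (hc : H.Connected) (hnt : H.verts.Nontrivial) :
    ∃ ℓ u : V, H.Adj ℓ u ∧ ∀ x, H.Adj ℓ x → x = u := by
  classical
  have htree : H.coe.IsTree := ⟨hc, acyclic_coe hT H⟩
  haveI : Nontrivial ↥H.verts := hnt.coe_sort
  have cardeq : ∀ (v : ↥H.verts) (i : Fintype (H.coe.neighborSet v)),
      @Fintype.card _ i = (H.coe.neighborSet v).ncard := fun s i => by
    rw [← Nat.card_eq_fintype_card, Nat.card_coe_set_eq]
  have hdeg : ∀ v : ↥H.verts, 0 < (H.coe.neighborSet v).ncard := by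
    intro v
    refine (Set.ncard_pos (Set.toFinite _)).mpr ?_
    obtain ⟨w', hw'⟩ := exists_ne v
    obtain ⟨p⟩ := hc.preconnected w' v
    exact ⟨p.reverse.getVert 1,
      p.reverse.adj_snd (SimpleGraph.Walk.not_nil_of_ne hw'.symm)⟩
  have hsum := H.coe.sum_degrees_eq_twice_card_edges
  have hsum2 : ∑ v : ↥H.verts, (H.coe.neighborSet v).ncard = 2 * #H.coe.edgeFinset := by
    rw [← hsum]
    exact Finset.sum_congr rfl fun v _ => by
      rw [← SimpleGraph.card_neighborSet_eq_degree, cardeq]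
  have hcard := htree.card_edgeFinset
  have h2 : 2 ≤ Fintype.card ↥H.verts := Fintype.one_lt_card
  have hex : ∃ v : ↥H.verts, (H.coe.neighborSet v).ncard = 1 := by
    by_contra hno
    push_neg at hno
    have hall : ∀ v ∈ Finset.univ, 2 ≤ (H.coe.neighborSet v).ncard := fun v _ => by
      have h1 := hdeg v; have h3 := hno v; omega
    have hge := Finset.card_nsmul_le_sum Finset.univ
      (fun v => (H.coe.neighborSet v).ncard) 2 hall
    rw [Finset.card_univ, smul_eq_mul] at hge
    omega
  obtain ⟨v, hv⟩ := hex
  obtain ⟨u0, hu0⟩ := Set.ncard_eq_one.mp hv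
  refine ⟨↑v, ↑u0, ?_, ?_⟩
  · have : u0 ∈ H.coe.neighborSet v := by rw [hu0]; rfl
    exact this
  · intro x hx
    have hxv : x ∈ H.verts := H.edge_vert (H.adj_symm hx)
    have : (⟨x, hxv⟩ : ↥H.verts) ∈ H.coe.neighborSet v := hx
    rw [hu0] at this
    exact congrArg Subtype.val this

lemma toSubgraph_bypass_le [DecidableEq V] {a b : V} (p : T.Walk a b) : p.bypass.toSubgraph ≤ p.toSubgraph := by
  constructor
  · intro x hx
    rw [SimpleGraph.Walk.mem_verts_toSubgraph] at hx ⊢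
    exact p.support_bypass_subset hx
  · intro x y hxy
    rw [← SimpleGraph.Subgraph.mem_edgeSet, SimpleGraph.Walk.edgeSet_toSubgraph] at hxy ⊢
    exact p.edges_bypass_subset hxy

lemma connected_deleteVerts_leaf (hT : T.IsAcyclic) (H : T.Subgraph) (hc : H.Connected)
    {ℓ u : V} (hadj : H.Adj ℓ u) (huniq : ∀ x, H.Adj ℓ x → x = u) :
    (H.deleteVerts {ℓ}).Connected := by
  classical
  rw [SimpleGraph.Subgraph.connected_iff_forall_exists_walk_subgraph]
  constructor
  · exact ⟨u, by
      simp only [SimpleGraph.Subgraph.deleteVerts_verts, Set.mem_diff, Set.mem_singleton_iff]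
      exact ⟨H.edge_vert (H.adj_symm hadj), fun h => hadj.ne h.symm⟩⟩
  · intro x y hx hy
    rw [SimpleGraph.Subgraph.deleteVerts_verts, Set.mem_diff, Set.mem_singleton_iff] at hx hy
    obtain ⟨p, hple⟩ := ((SimpleGraph.Subgraph.connected_iff_forall_exists_walk_subgraph
      H).mp hc).2 hx.1 hy.1
    refine ⟨p.bypass, ?_⟩
    have hple2 : p.bypass.toSubgraph ≤ H := le_trans (toSubgraph_bypass_le p) hple
    have hns : ℓ ∉ p.bypass.support := by
      intro hmem
      obtain ⟨y1, z1, hne, h1, h2⟩ := two_nbrs p.bypass p.bypass_isPath hmem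
        (Ne.symm hx.2) (Ne.symm hy.2)
      exact hne ((huniq y1 (hple2.2 h1)).trans (huniq z1 (hple2.2 h2)).symm)
    constructor
    · intro z hz
      rw [SimpleGraph.Walk.mem_verts_toSubgraph] at hz
      simp only [SimpleGraph.Subgraph.deleteVerts_verts, Set.mem_diff, Set.mem_singleton_iff]
      refine ⟨hple2.1 (by rw [SimpleGraph.Walk.mem_verts_toSubgraph]; exact hz), ?_⟩
      rintro rfl; exact hns hz
    · intro a' b' hab
      have ha' : a' ∈ p.bypass.support := by
        have := hab.fst_mem
        rwa [SimpleGraph.Walk.mem_verts_toSubgraph] at this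
      have hb' : b' ∈ p.bypass.support := by
        have := hab.snd_mem
        rwa [SimpleGraph.Walk.mem_verts_toSubgraph] at this
      rw [SimpleGraph.Subgraph.deleteVerts_adj]
      refine ⟨hple2.1 (by rw [SimpleGraph.Walk.mem_verts_toSubgraph]; exact ha'), ?_,
        hple2.1 (by rw [SimpleGraph.Walk.mem_verts_toSubgraph]; exact hb'), ?_, hple2.2 hab⟩
      · simp only [Set.mem_singleton_iff]; rintro rfl; exact hns ha'
      · simp only [Set.mem_singleton_iff]; rintro rfl; exact hns hb'

lemma decomp (H : T.Subgraph) {ℓ u : V} (hadj : H.Adj ℓ u) (huniq : ∀ x, H.Adj ℓ x → x = u) :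
    H = H.deleteVerts {ℓ} ⊔ T.subgraphOfAdj (H.adj_sub hadj) := by
  apply le_antisymm
  · constructor
    · intro x hx
      rw [SimpleGraph.Subgraph.verts_sup, SimpleGraph.Subgraph.deleteVerts_verts]
      by_cases hxl : x = ℓ
      · subst hxl; right; simp
      · left; exact ⟨hx, fun h => hxl h⟩
    · intro x y hxy
      rw [SimpleGraph.Subgraph.sup_adj]
      by_cases hxl : x = ℓ
      · subst hxl
        right
        rw [SimpleGraph.subgraphOfAdj_adj, huniq y hxy]
      · by_cases hyl : y = ℓ
        · subst hyl
          right
          rw [SimpleGraph.subgraphOfAdj_adj, huniq x (H.adj_symm hxy), Sym2.eq_swap]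
        · left
          rw [SimpleGraph.Subgraph.deleteVerts_adj]
          exact ⟨H.edge_vert hxy, by simpa using hxl, H.edge_vert (H.adj_symm hxy),
            by simpa using hyl, hxy⟩
  · exact sup_le (SimpleGraph.Subgraph.deleteVerts_le)
      (SimpleGraph.subgraphOfAdj_le_of_adj H hadj)

lemma edge_not_in {H : T.Subgraph} {K : T.Subgraph} {ℓ u : V}
    (hK : K ≤ H.deleteVerts {ℓ}) : s(ℓ, u) ∉ K.edgeSet := by
  intro hmem
  rw [SimpleGraph.Subgraph.mem_edgeSet] at hmem
  have := (hK.2 hmem).fst_mem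
  simp [SimpleGraph.Subgraph.deleteVerts_verts] at this

open Classical in
lemma key_lemma [Fintype V] (hT : T.IsAcyclic) :
    ∀ (n : ℕ) (H : T.Subgraph), H.verts.ncard ≤ n → H.Connected →
    ∀ (k m : ℕ), 0 < k → 0 < m → ∀ (w : V → ℕ), (∀ v, w v ≤ m) →
    2 * m * k ≤ ∑ v ∈ H.verts.toFinset, w v →
    ∃ (Ts : Fin k → T.Subgraph) (A : Fin k → Finset V),
      (∀ p, (Ts p).Connected) ∧
      (∀ p q, p ≠ q → Disjoint (Ts p).edgeSet (Ts q).edgeSet) ∧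
      (⨆ p, Ts p) = H ∧
      (∀ p, ↑(A p) ⊆ (Ts p).verts) ∧
      (∀ p, ∀ v ∈ A p, 0 < w v) ∧
      (∀ p, m ≤ ∑ v ∈ A p, w v) ∧
      (∀ p q, p ≠ q → Disjoint (A p) (A q)) := by
  classical
  intro n
  induction n with
  | zero =>
    intro H hn hc
    exfalso
    have h1 := (Set.ncard_pos (H.verts.toFinite)).mpr hc.nonempty
    omega
  | succ n ih =>
    intro H hn hc k m hk hm w hw hsum
    rcases Nat.lt_or_ge k 2 with hk2 | hk2
    · -- base case : k = 1
      have hk1 : k = 1 := by omega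
      subst hk1
      refine ⟨fun _ => H, fun _ => H.verts.toFinset.filter (fun v => w v ≠ 0),
        fun _ => hc, fun p q hpq => absurd (Subsingleton.elim p q) hpq, iSup_const,
        ?_, ?_, ?_, fun p q hpq => absurd (Subsingleton.elim p q) hpq⟩
      · intro p x hx
        simp only [Finset.coe_filter, Set.mem_setOf_eq, Set.mem_toFinset] at hx
        exact hx.1
      · intro p v hv
        exact Nat.pos_of_ne_zero (Finset.mem_filter.mp hv).2
      · intro p
        rw [Finset.sum_filter_ne_zero]
        omega
    · -- inductive step : k ≥ 2
      have hnt : H.verts.Nontrivial := by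
        by_contra hns
        rw [Set.not_nontrivial_iff] at hns
        obtain ⟨v0, hv0⟩ := hc.nonempty
        have hsub : H.verts.toFinset ⊆ {v0} := by
          intro x hx
          rw [Set.mem_toFinset] at hx
          simp [hns hx hv0]
        have h1 : ∑ v ∈ H.verts.toFinset, w v ≤ ∑ v ∈ ({v0} : Finset V), w v :=
          Finset.sum_le_sum_of_subset hsub
        rw [Finset.sum_singleton] at h1
        have h2 : 2 * m * 2 ≤ 2 * m * k := Nat.mul_le_mul_left _ hk2
        have := hw v0
        omega
      obtain ⟨ℓ, u, hadj, huniq⟩ := exists_leaf hT H hc hnt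
      have hlu : ℓ ≠ u := hadj.ne
      set H' := H.deleteVerts {ℓ} with hH'
      set pend := T.subgraphOfAdj (H.adj_sub hadj) with hpend
      have hdec : H = H' ⊔ pend := decomp H hadj huniq
      have hlH : ℓ ∈ H.verts := H.edge_vert hadj
      have hup : u ∈ H'.verts := by
        simp only [hH', SimpleGraph.Subgraph.deleteVerts_verts, Set.mem_diff,
          Set.mem_singleton_iff]
        exact ⟨H.edge_vert (H.adj_symm hadj), fun h => hlu h.symm⟩
      have hlnotH' : ℓ ∉ H'.verts := by
        simp [hH', SimpleGraph.Subgraph.deleteVerts_verts]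
      have hc' : H'.Connected := connected_deleteVerts_leaf hT H hc hadj huniq
      have hcard' : H'.verts.ncard ≤ n := by
        have h1 : H'.verts = H.verts \ {ℓ} := SimpleGraph.Subgraph.deleteVerts_verts
        have h2 := Set.ncard_diff_singleton_lt_of_mem hlH (H.verts.toFinite)
        rw [h1]
        omega
      have hlmem : ℓ ∈ H.verts.toFinset := Set.mem_toFinset.mpr hlH
      have humem' : u ∈ H'.verts.toFinset := Set.mem_toFinset.mpr hup
      have hFeq : H'.verts.toFinset = H.verts.toFinset.erase ℓ := by
        ext x
        simp only [Set.mem_toFinset, hH', SimpleGraph.Subgraph.deleteVerts_verts,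
          Set.mem_diff, Set.mem_singleton_iff, Finset.mem_erase]
        tauto
      have hsplit : ∑ v ∈ H.verts.toFinset, w v = w ℓ + ∑ v ∈ H'.verts.toFinset, w v := by
        rw [hFeq, Finset.add_sum_erase _ _ hlmem]
      have hpendverts : pend.verts = {ℓ, u} := rfl
      have hpendedge : pend.edgeSet = {s(ℓ, u)} := SimpleGraph.edgeSet_subgraphOfAdj _
      have hpendle : pend ≤ H := SimpleGraph.subgraphOfAdj_le_of_adj H hadj
      by_cases hsmall : w ℓ + w u ≤ m
      · -- contract the leaf into its neighbour
        set w' := Function.update w u (w u + w ℓ) with hw'def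
        have hw'u : w' u = w u + w ℓ := Function.update_self _ _ _
        have hw'ne : ∀ v, v ≠ u → w' v = w v := fun v hv => Function.update_of_ne hv _ _
        have hw'le : ∀ v, w' v ≤ m := by
          intro v
          by_cases hv : v = u
          · subst hv; rw [hw'u]; omega
          · rw [hw'ne v hv]; exact hw v
        have hsum' : ∑ v ∈ H'.verts.toFinset, w' v = w ℓ + ∑ v ∈ H'.verts.toFinset, w v := by
          have e1 : (w' u + ∑ x ∈ H'.verts.toFinset.erase u, w' x)
              = ∑ v ∈ H'.verts.toFinset, w' v := Finset.add_sum_erase _ _ humem'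
          have e2 : (w u + ∑ x ∈ H'.verts.toFinset.erase u, w x)
              = ∑ v ∈ H'.verts.toFinset, w v := Finset.add_sum_erase _ _ humem'
          have e3 : ∑ x ∈ H'.verts.toFinset.erase u, w' x
              = ∑ x ∈ H'.verts.toFinset.erase u, w x :=
            Finset.sum_congr rfl fun x hx => hw'ne x (Finset.ne_of_mem_erase hx)
          rw [← e1, ← e2, e3, hw'u]
          ring
        have hrec := ih H' hcard' hc' k m hk hm w' hw'le (by rw [hsum']; omega)
        obtain ⟨Ts', A', hconn', hdisj', hsup', hsubA', hposA', hsumA', hdisjA'⟩ := hrec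
        have hTsle : ∀ p, Ts' p ≤ H' := fun p => (le_iSup Ts' p).trans hsup'.le
        have hAleH' : ∀ p x, x ∈ A' p → x ∈ H'.verts := by
          intro p x hx
          exact SimpleGraph.Subgraph.verts_mono (hTsle p) (hsubA' p hx)
        have hlnotA : ∀ p, ℓ ∉ A' p := fun p hx => hlnotH' (hAleH' p _ hx)
        -- choose the distinguished piece
        have hexv : ∃ p, u ∈ (Ts' p).verts := by
          have h1 : u ∈ (⨆ p, Ts' p).verts := by rw [hsup']; exact hup
          rw [SimpleGraph.Subgraph.verts_iSup] at h1
          simpa using h1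
        obtain ⟨phat, hphat, huA⟩ :
            ∃ phat, u ∈ (Ts' phat).verts ∧ (∀ q, u ∈ A' q → q = phat) := by
          by_cases hexA : ∃ p, u ∈ A' p
          · obtain ⟨p0, hp0⟩ := hexA
            refine ⟨p0, hsubA' p0 hp0, fun q hq => ?_⟩
            by_contra hne
            exact (Finset.disjoint_left.mp (hdisjA' q p0 hne) hq) hp0
          · push_neg at hexA
            obtain ⟨p0, hp0⟩ := hexv
            exact ⟨p0, hp0, fun q hq => absurd hq (hexA q)⟩
        set Anew : Finset V := if u ∈ A' phat
          then ((A' phat).erase u ∪ ({ℓ, u} : Finset V).filter (fun x => w x ≠ 0))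
          else A' phat with hAnew
        set Ts : Fin k → T.Subgraph := Function.update Ts' phat (Ts' phat ⊔ pend) with hTs
        set A : Fin k → Finset V := Function.update A' phat Anew with hA
        have hTseq : ∀ p, p ≠ phat → Ts p = Ts' p := fun p hp => Function.update_of_ne hp _ _
        have hTshat : Ts phat = Ts' phat ⊔ pend := Function.update_self _ _ _
        have hAeq : ∀ p, p ≠ phat → A p = A' p := fun p hp => Function.update_of_ne hp _ _
        have hAhat : A phat = Anew := Function.update_self _ _ _
        have hAnotu : ∀ p, p ≠ phat → u ∉ A' p := fun p hp hu => hp (huA p hu)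
        have hedge_not : ∀ q, s(ℓ, u) ∉ (Ts' q).edgeSet := fun q => edge_not_in (hTsle q)
        refine ⟨Ts, A, ?_, ?_, ?_, ?_, ?_, ?_, ?_⟩
        · intro p
          by_cases hp : p = phat
          · rw [hp, hTshat]
            refine SimpleGraph.Subgraph.connected_sup (hconn' phat).preconnected (SimpleGraph.Subgraph.subgraphOfAdj_connected _).preconnected ⟨u, ?_⟩
            rw [SimpleGraph.Subgraph.verts_inf]
            exact ⟨hphat, by rw [hpendverts]; right; rfl⟩
          · rw [hTseq p hp]; exact hconn' p
        · intro p q hpq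
          have key : ∀ q, q ≠ phat →
              Disjoint (Ts phat).edgeSet (Ts' q).edgeSet := by
            intro q hq
            rw [hTshat, SimpleGraph.Subgraph.edgeSet_sup, hpendedge]
            refine Set.disjoint_union_left.mpr ⟨hdisj' phat q (fun h => hq h.symm), ?_⟩
            rw [Set.disjoint_singleton_left]
            exact hedge_not q
          by_cases hp : p = phat
          · have hq' : q ≠ phat := fun h => hpq (by rw [hp, h])
            rw [hp, hTseq q hq']
            exact key q hq'
          · by_cases hq : q = phat
            · have hp' : p ≠ phat := hp
              rw [hq, hTseq p hp']
              exact (key p hp').symm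
            · rw [hTseq p hp, hTseq q hq]
              exact hdisj' p q hpq
        · apply le_antisymm
          · refine iSup_le fun p => ?_
            by_cases hp : p = phat
            · rw [hp, hTshat]
              exact sup_le ((hTsle _).trans SimpleGraph.Subgraph.deleteVerts_le) hpendle
            · rw [hTseq p hp]
              exact (hTsle p).trans SimpleGraph.Subgraph.deleteVerts_le
          · rw [hdec]
            refine sup_le ?_ ?_
            · rw [← hsup']
              refine iSup_le fun p => ?_
              by_cases hp : p = phat
              · rw [hp]
                exact le_trans (le_sup_left : Ts' phat ≤ Ts' phat ⊔ pend)
                  (hTshat ▸ le_iSup Ts phat)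
              · exact le_trans (le_of_eq (hTseq p hp).symm) (le_iSup Ts p)
            · exact le_trans (le_sup_right : pend ≤ Ts' phat ⊔ pend)
                (hTshat ▸ le_iSup Ts phat)
        · intro p x hx
          by_cases hp : p = phat
          · rw [hp] at hx ⊢
            rw [hAhat] at hx
            rw [hTshat]
            rw [SimpleGraph.Subgraph.verts_sup]
            rw [hAnew] at hx
            by_cases hu : u ∈ A' phat
            · rw [if_pos hu] at hx
              rcases Finset.mem_union.mp hx with h1 | h1
              · exact Or.inl (hsubA' phat (Finset.mem_of_mem_erase h1))
              · right
                rw [hpendverts]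
                have := (Finset.mem_filter.mp h1).1
                simpa using this
            · rw [if_neg hu] at hx
              exact Or.inl (hsubA' phat hx)
          · rw [hAeq p hp] at hx
            rw [hTseq p hp]
            exact hsubA' p hx
        · intro p v hv
          by_cases hp : p = phat
          · rw [hp] at hv
            rw [hAhat, hAnew] at hv
            by_cases hu : u ∈ A' phat
            · rw [if_pos hu] at hv
              rcases Finset.mem_union.mp hv with h1 | h1
              · have hne := Finset.ne_of_mem_erase h1
                have := hposA' phat v (Finset.mem_of_mem_erase h1)
                rwa [hw'ne v hne] at this
              · exact Nat.pos_of_ne_zero (Finset.mem_filter.mp h1).2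
            · rw [if_neg hu] at hv
              have hvne : v ≠ u := fun h => hu (h ▸ hv)
              have := hposA' phat v hv
              rwa [hw'ne v hvne] at this
          · rw [hAeq p hp] at hv
            have hvne : v ≠ u := fun h => (hAnotu p hp) (h ▸ hv)
            have := hposA' p v hv
            rwa [hw'ne v hvne] at this
        · intro p
          by_cases hp : p = phat
          · rw [hp, hAhat, hAnew]
            by_cases hu : u ∈ A' phat
            · rw [if_pos hu]
              have hdisjU : Disjoint ((A' phat).erase u)
                  (({ℓ, u} : Finset V).filter (fun x => w x ≠ 0)) := by
                rw [Finset.disjoint_right]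
                intro x hx
                have hx2 := (Finset.mem_filter.mp hx).1
                rcases Finset.mem_insert.mp hx2 with rfl | hx3
                · exact fun hmem => hlnotA phat (Finset.mem_of_mem_erase hmem)
                · rw [Finset.mem_singleton] at hx3
                  subst hx3
                  exact fun hmem => (Finset.notMem_erase _ _) hmem
              rw [Finset.sum_union hdisjU.symm.symm]
              have e3 : ∑ x ∈ (A' phat).erase u, w x = ∑ x ∈ (A' phat).erase u, w' x :=
                Finset.sum_congr rfl fun x hx => (hw'ne x (Finset.ne_of_mem_erase hx)).symm
              have e4 : ∑ x ∈ ({ℓ, u} : Finset V).filter (fun x => w x ≠ 0), w x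
                  = ∑ x ∈ ({ℓ, u} : Finset V), w x := Finset.sum_filter_ne_zero _
              have e5 : ∑ x ∈ ({ℓ, u} : Finset V), w x = w ℓ + w u :=
                Finset.sum_pair hlu
              have e6 : (w' u + ∑ x ∈ (A' phat).erase u, w' x) = ∑ v ∈ A' phat, w' v :=
                Finset.add_sum_erase _ _ hu
              have e7 := hsumA' phat
              rw [e3, e4, e5]
              rw [hw'u] at e6
              omega
            · rw [if_neg hu]
              have e3 : ∑ x ∈ A' phat, w x = ∑ x ∈ A' phat, w' x :=
                Finset.sum_congr rfl fun x hx =>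
                  (hw'ne x (fun h => hu (h ▸ hx))).symm
              rw [e3]
              exact hsumA' phat
          · rw [hAeq p hp]
            have e3 : ∑ x ∈ A' p, w x = ∑ x ∈ A' p, w' x :=
              Finset.sum_congr rfl fun x hx =>
                (hw'ne x (fun h => (hAnotu p hp) (h ▸ hx))).symm
            rw [e3]
            exact hsumA' p
        · intro p q hpq
          have key : ∀ q, q ≠ phat → Disjoint Anew (A' q) := by
            intro q hq
            rw [hAnew]
            by_cases hu : u ∈ A' phat
            · rw [if_pos hu]
              refine Finset.disjoint_union_left.mpr ⟨?_, ?_⟩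
              · exact Finset.disjoint_of_subset_left (Finset.erase_subset _ _)
                  (hdisjA' phat q (fun h => hq h.symm))
              · rw [Finset.disjoint_left]
                intro x hx
                have hx2 := (Finset.mem_filter.mp hx).1
                rcases Finset.mem_insert.mp hx2 with rfl | hx3
                · exact hlnotA q
                · rw [Finset.mem_singleton] at hx3
                  subst hx3
                  exact hAnotu q hq
            · rw [if_neg hu]
              exact hdisjA' phat q (fun h => hq h.symm)
          by_cases hp : p = phat
          · have hq' : q ≠ phat := fun h => hpq (by rw [hp, h])
            rw [hp, hAhat, hAeq q hq']
            exact key q hq'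
          · by_cases hq : q = phat
            · rw [hq, hAeq p hp, hAhat]
              exact (key p hp).symm
            · rw [hAeq p hp, hAeq q hq]
              exact hdisjA' p q hpq
      · -- split off the pendant edge as its own piece
        push_neg at hsmall
        obtain ⟨k', rfl⟩ : ∃ k', k = k' + 1 := ⟨k - 1, by omega⟩
        have hk' : 0 < k' := by omega
        set w'' := Function.update w u 0 with hw''def
        have hw''u : w'' u = 0 := Function.update_self _ _ _
        have hw''ne : ∀ v, v ≠ u → w'' v = w v := fun v hv => Function.update_of_ne hv _ _
        have hw''le : ∀ v, w'' v ≤ m := by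
          intro v
          by_cases hv : v = u
          · subst hv; rw [hw''u]; omega
          · rw [hw''ne v hv]; exact hw v
        have hsum'' : 2 * m * k' ≤ ∑ v ∈ H'.verts.toFinset, w'' v := by
          have e1 : (w'' u + ∑ x ∈ H'.verts.toFinset.erase u, w'' x)
              = ∑ v ∈ H'.verts.toFinset, w'' v := Finset.add_sum_erase _ _ humem'
          have e2 : (w u + ∑ x ∈ H'.verts.toFinset.erase u, w x)
              = ∑ v ∈ H'.verts.toFinset, w v := Finset.add_sum_erase _ _ humem'
          have e3 : ∑ x ∈ H'.verts.toFinset.erase u, w'' x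
              = ∑ x ∈ H'.verts.toFinset.erase u, w x :=
            Finset.sum_congr rfl fun x hx => hw''ne x (Finset.ne_of_mem_erase hx)
          have e4 : 2 * m * (k' + 1) = 2 * m * k' + 2 * m := by ring
          have h5 := hw ℓ
          have h6 := hw u
          omega
        have hrec := ih H' hcard' hc' k' m hk' hm w'' hw''le hsum''
        obtain ⟨Ts'', A'', hconn'', hdisj'', hsup'', hsubA'', hposA'', hsumA'', hdisjA''⟩ := hrec
        have hTsle'' : ∀ p, Ts'' p ≤ H' := fun p => (le_iSup Ts'' p).trans hsup''.le
        have hAleH'' : ∀ p x, x ∈ A'' p → x ∈ H'.verts := by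
          intro p x hx
          exact SimpleGraph.Subgraph.verts_mono (hTsle'' p) (hsubA'' p hx)
        have hunotA : ∀ p, u ∉ A'' p := by
          intro p hu
          have := hposA'' p u hu
          omega
        have hlnotA : ∀ p, ℓ ∉ A'' p := fun p hx => hlnotH' (hAleH'' p _ hx)
        set Ts : Fin (k' + 1) → T.Subgraph := Fin.cons pend Ts'' with hTs
        set A : Fin (k' + 1) → Finset V :=
          Fin.cons (({ℓ, u} : Finset V).filter (fun x => w x ≠ 0)) A'' with hA
        have hTs0 : Ts 0 = pend := rfl
        have hTssucc : ∀ j, Ts j.succ = Ts'' j := fun j => Fin.cons_succ _ _ _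
        have hA0 : A 0 = ({ℓ, u} : Finset V).filter (fun x => w x ≠ 0) := rfl
        have hAsucc : ∀ j, A j.succ = A'' j := fun j => Fin.cons_succ _ _ _
        have hedge_not : ∀ q, s(ℓ, u) ∉ (Ts'' q).edgeSet := fun q => edge_not_in (hTsle'' q)
        refine ⟨Ts, A, ?_, ?_, ?_, ?_, ?_, ?_, ?_⟩
        · intro p
          refine Fin.cases ?_ ?_ p
          · rw [hTs0]; exact SimpleGraph.Subgraph.subgraphOfAdj_connected _
          · intro j; rw [hTssucc j]; exact hconn'' j
        · intro p q
          have key : ∀ q, Disjoint pend.edgeSet (Ts'' q).edgeSet := by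
            intro q
            rw [hpendedge, Set.disjoint_singleton_left]
            exact hedge_not q
          refine Fin.cases ?_ ?_ p <;> [skip; intro i] <;> refine Fin.cases ?_ ?_ q
          · intro h; exact absurd rfl h
          · intro j _; rw [hTs0, hTssucc j]; exact key j
          · intro h; rw [hTs0, hTssucc i]; exact (key i).symm
          · intro j hij
            rw [hTssucc i, hTssucc j]
            exact hdisj'' i j (fun h => hij (congrArg Fin.succ h))
        · apply le_antisymm
          · refine iSup_le fun p => ?_
            refine Fin.cases ?_ ?_ p
            · rw [hTs0]; exact hpendle
            · intro j
              rw [hTssucc j]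
              exact (hTsle'' j).trans SimpleGraph.Subgraph.deleteVerts_le
          · rw [hdec]
            refine sup_le ?_ ?_
            · rw [← hsup'']
              refine iSup_le fun j => ?_
              exact (hTssucc j).symm.le.trans (le_iSup Ts j.succ)
            · exact hTs0.symm.le.trans (le_iSup Ts 0)
        · intro p
          refine Fin.cases ?_ ?_ p
          · rw [hA0, hTs0]
            intro x hx
            have hx2 := (Finset.mem_filter.mp hx).1
            rw [hpendverts]
            simpa using hx2
          · intro j
            rw [hAsucc j, hTssucc j]
            exact hsubA'' j
        · intro p
          refine Fin.cases ?_ ?_ p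
          · intro v hv
            rw [hA0] at hv
            exact Nat.pos_of_ne_zero (Finset.mem_filter.mp hv).2
          · intro j v hv
            rw [hAsucc j] at hv
            have hvne : v ≠ u := fun h => (hunotA j) (h ▸ hv)
            have := hposA'' j v hv
            rwa [hw''ne v hvne] at this
        · intro p
          refine Fin.cases ?_ ?_ p
          · rw [hA0]
            have e4 : ∑ x ∈ ({ℓ, u} : Finset V).filter (fun x => w x ≠ 0), w x
                = ∑ x ∈ ({ℓ, u} : Finset V), w x := Finset.sum_filter_ne_zero _
            have e5 : ∑ x ∈ ({ℓ, u} : Finset V), w x = w ℓ + w u := Finset.sum_pair hlu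
            omega
          · intro j
            rw [hAsucc j]
            have e3 : ∑ x ∈ A'' j, w x = ∑ x ∈ A'' j, w'' x :=
              Finset.sum_congr rfl fun x hx =>
                (hw''ne x (fun h => (hunotA j) (h ▸ hx))).symm
            rw [e3]
            exact hsumA'' j
        · intro p q
          have key : ∀ q, Disjoint (({ℓ, u} : Finset V).filter (fun x => w x ≠ 0)) (A'' q) := by
            intro q
            rw [Finset.disjoint_left]
            intro x hx
            have hx2 := (Finset.mem_filter.mp hx).1
            rcases Finset.mem_insert.mp hx2 with rfl | hx3
            · exact hlnotA q
            · rw [Finset.mem_singleton] at hx3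
              subst hx3
              exact hunotA q
          refine Fin.cases ?_ ?_ p <;> [skip; intro i] <;> refine Fin.cases ?_ ?_ q
          · intro h; exact absurd rfl h
          · intro j _; rw [hA0, hAsucc j]; exact key j
          · intro h; rw [hA0, hAsucc i]; exact (key i).symm
          · intro j hij
            rw [hAsucc i, hAsucc j]
            exact hdisjA'' i j (fun h => hij (congrArg Fin.succ h))


end TreeDecompHelpers

/-- A tree with at least `2mk` marked vertices can be decomposed into `k` edge-disjoint
subtrees covering it, each containing `m` marked vertices of its own. -/
theorem tree_decomposition_with_marks (V : Type) [Fintype V] (T : SimpleGraph V)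
    (hT : T.IsTree) (k m : ℕ) (hk : 0 < k) (hm : 0 < m) (f : V → Fin 2)
    (hmark : 2 * m * k ≤ {v : V | f v = 1}.ncard) :
    ∃ (Ts : Fin k → T.Subgraph) (A : Fin k → Set V),
      (∀ p, (Ts p).coe.IsTree) ∧
      (∀ p q, p ≠ q → Disjoint (Ts p).edgeSet (Ts q).edgeSet) ∧
      (⨆ p, Ts p) = ⊤ ∧
      (∀ p, A p ⊆ (Ts p).verts) ∧
      (∀ p, ∀ v ∈ A p, f v = 1) ∧
      (∀ p, m ≤ (A p).ncard) ∧
      (∀ p q, p ≠ q → Disjoint (A p) (A q)) := by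
  classical
  obtain ⟨hTc, hTa⟩ := hT
  set w : V → ℕ := fun v => if f v = 1 then 1 else 0 with hwdef
  have hwle : ∀ v, w v ≤ m := fun v => by dsimp only [w]; split <;> omega
  have hne : Nonempty V := by
    by_contra h
    rw [not_nonempty_iff] at h
    have h0 : {v : V | f v = 1}.ncard = 0 := by
      have : {v : V | f v = 1} = ∅ := Set.eq_empty_of_isEmpty _
      rw [this, Set.ncard_empty]
    have : 0 < 2 * m * k := by positivity
    omega
  have htop : (⊤ : T.Subgraph).Connected := by
    rw [SimpleGraph.Subgraph.connected_iff_forall_exists_walk_subgraph]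
    refine ⟨⟨Classical.arbitrary V, trivial⟩, ?_⟩
    intro u v _ _
    obtain ⟨p⟩ := hTc.preconnected u v
    exact ⟨p, le_top⟩
  have hsumtop : 2 * m * k ≤ ∑ v ∈ (⊤ : T.Subgraph).verts.toFinset, w v := by
    have h1 : ∑ v ∈ (⊤ : T.Subgraph).verts.toFinset, w v = ∑ v ∈ Finset.univ, w v := by
      apply Finset.sum_congr _ (fun _ _ => rfl)
      ext x
      simp [SimpleGraph.Subgraph.verts_top]
    have h2 : ∑ v ∈ Finset.univ, w v = (Finset.univ.filter (fun v => f v = 1)).card := by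
      dsimp only [w]
      rw [Finset.sum_ite, Finset.sum_const, smul_eq_mul, mul_one, Finset.sum_const_zero,
        add_zero]
    have h3 : {v : V | f v = 1}.ncard = (Finset.univ.filter (fun v => f v = 1)).card := by
      rw [← Set.ncard_coe_finset]
      congr 1
      ext x
      simp
    omega
  obtain ⟨Ts, A, hconn, hdisj, hsup, hsubA, hposA, hsumA, hdisjA⟩ :=
    key_lemma hTa ((⊤ : T.Subgraph).verts.ncard) ⊤ le_rfl htop k m hk hm w hwle hsumtop
  refine ⟨Ts, fun p => ↑(A p), fun p => ⟨hconn p, acyclic_coe hTa (Ts p)⟩, hdisj, hsup,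
    fun p => hsubA p, ?_, ?_, ?_⟩
  · intro p v hv
    have hpos := hposA p v (Finset.mem_coe.mp hv)
    by_contra hfv
    have : w v = 0 := by dsimp only [w]; rw [if_neg hfv]
    omega
  · intro p
    rw [Set.ncard_coe_finset]
    have h4 : ∑ v ∈ A p, w v ≤ (A p).card * 1 := by
      refine Finset.sum_le_card_nsmul _ _ 1 (fun x _ => ?_)
      dsimp only [w]; split <;> omega
    have := hsumA p
    omega
  · intro p q hpq
    exact Finset.disjoint_coe.mpr (hdisjA p q hpq)
end
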